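/- arXiv:2006.08175 — 8 statements merged into one kernel-verified Lean document; each statement's English description precedes it below -/
import Mathlib

section
/- Suppose J is naturally monotonically backward separable with representation maps {φ_t}_{t=0}^T and Γ_{x,t} ≠ ∅ for all x ∈ X_t and t ∈ {0,…,T−1}. Then for every k ∈ {0,…,T−1} and x ∈ X_k, inf_{u ∈ Γ_{x,k}} φ_k(x, u, inf_{(u(k+1),…,u(T−1)) ∈ Γ_{f(x,u,k),[k+1,T−1]}} φ_{k+1}(x(k+1),u(k+1), …, φ_T(x(T))…)) = inf_{(u(k),…,u(T−1)) ∈ Γ_{x,[k,T−1]}} φ_k(x(k),u(k), φ_{k+1}(x(k+1),u(k+1), …, φ_T(x(T))…)), where x(k) = x, x(t+1) = f(x(t),u(t),t) for t = k,…,T−1, and for k = T−1 the inner expression is read as φ_{T−1}(x,u,φ_T(f(x,u,T−1))); i.e. the order of the infimum and the composition of representation maps can be interchanged. -/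
open Set Filter MeasureTheory

/-- `nest φ φT u x t k` is the backward composition of representation maps
`φ t (x t) (u t) (φ (t+1) (x (t+1)) (u (t+1)) (… (φT (x (t+k))) …)))`
with `k` composition steps, terminating at time `t + k`. -/
def nest {α β : Type*} (φ : ℕ → α → β → ℝ → ℝ) (φT : α → ℝ)
    (u : ℕ → β) (x : ℕ → α) : ℕ → ℕ → ℝ
  | t, 0 => φT (x t)
  | t, k + 1 => φ t (x t) (u t) (nest φ φT u x (t + 1) k)

/-- `imSet φ φT X U t k` is the image of the representation map at time `t`
over its domain, where `k` is the number of remaining steps until the terminal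
time `t + k` (so `Image φ_t = imSet φ φT X U t (T - t)` when the horizon is `T`). -/
def imSet {α β : Type*} (φ : ℕ → α → β → ℝ → ℝ) (φT : α → ℝ)
    (X : ℕ → Set α) (U : Set β) : ℕ → ℕ → Set ℝ
  | t, 0 => φT '' X t
  | t, k + 1 =>
      {z | ∃ a ∈ X t, ∃ b ∈ U, ∃ w ∈ imSet φ φT X U (t + 1) k, z = φ t a b w}

/-- `J` is represented on its domain by the representation maps `φ, φT`
(backward composition with horizon `T`). -/
def IsRep {α β : Type*} (T : ℕ) (X : ℕ → Set α) (U : Set β)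
    (J : (ℕ → β) → (ℕ → α) → ℝ) (φ : ℕ → α → β → ℝ → ℝ) (φT : α → ℝ) : Prop :=
  ∀ u x, (∀ t, t < T → u t ∈ U) → (∀ t, t ≤ T → x t ∈ X t) →
    J u x = nest φ φT u x 0 T

/-- each representation map is monotone in its third argument on the image of
the next representation map. -/
def MonoRep {α β : Type*} (T : ℕ) (X : ℕ → Set α) (U : Set β)
    (φ : ℕ → α → β → ℝ → ℝ) (φT : α → ℝ) : Prop :=
  ∀ t, t < T → ∀ a ∈ X t, ∀ b ∈ U,
    ∀ z ∈ imSet φ φT X U (t + 1) (T - (t + 1)),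
      ∀ w ∈ imSet φ φT X U (t + 1) (T - (t + 1)),
        w ≤ z → φ t a b w ≤ φ t a b z

/-- each representation map is strictly monotone in its third argument. -/
def StrictMonoRep {α β : Type*} (T : ℕ) (X : ℕ → Set α) (U : Set β)
    (φ : ℕ → α → β → ℝ → ℝ) (φT : α → ℝ) : Prop :=
  ∀ t, t < T → ∀ a ∈ X t, ∀ b ∈ U,
    ∀ z ∈ imSet φ φT X U (t + 1) (T - (t + 1)),
      ∀ w ∈ imSet φ φT X U (t + 1) (T - (t + 1)),
        w < z → φ t a b w < φ t a b z

/-- each representation map is upper semi-continuous in its third argument along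
monotonically decreasing sequences in the image of the next representation map. -/
def USCRep {α β : Type*} (T : ℕ) (X : ℕ → Set α) (U : Set β)
    (φ : ℕ → α → β → ℝ → ℝ) (φT : α → ℝ) : Prop :=
  ∀ t, t < T → ∀ a ∈ X t, ∀ b ∈ U, ∀ z : ℕ → ℝ,
    (∀ i, z i ∈ imSet φ φT X U (t + 1) (T - (t + 1))) →
    (∀ i, z (i + 1) ≤ z i) →
    ∀ L : ℝ, Tendsto z atTop (nhds L) →
      Tendsto (fun i => φ t a b (z i)) atTop (nhds (φ t a b L))

/-- each representation map has bounded image. -/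
def BddRep {α β : Type*} (T : ℕ) (X : ℕ → Set α) (U : Set β)
    (φ : ℕ → α → β → ℝ → ℝ) (φT : α → ℝ) : Prop :=
  ∀ t, t ≤ T → ∃ R, 0 < R ∧ ∀ z ∈ imSet φ φT X U t (T - t), |z| < R

/-- `GamSeq T f X U x0 s u x` says that the input sequence `(u s, …, u (T-1))`
belongs to `Γ_{x0,[s,T-1]}`, with `x` the corresponding state sequence:
`x s = x0`, `x (t+1) = f (x t) (u t) t`, `u t ∈ Γ_{x t, t}` for `s ≤ t ≤ T-1`. -/
def GamSeq {α β : Type*} (T : ℕ) (f : α → β → ℕ → α) (X : ℕ → Set α)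
    (U : Set β) (x0 : α) (s : ℕ) (u : ℕ → β) (x : ℕ → α) : Prop :=
  x s = x0 ∧ ∀ t, s ≤ t → t < T →
    u t ∈ U ∧ x (t + 1) = f (x t) (u t) t ∧ x (t + 1) ∈ X (t + 1)

/-- `(u,x)` is feasible for the MSOP with horizon `T` initialized at `x0` at time `0`. -/
def Feas {α β : Type*} (T : ℕ) (f : α → β → ℕ → α) (X : ℕ → Set α)
    (U : Set β) (x0 : α) (u : ℕ → β) (x : ℕ → α) : Prop :=
  x 0 = x0 ∧ (∀ t, t ≤ T → x t ∈ X t) ∧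
    ∀ t, t < T → u t ∈ U ∧ x (t + 1) = f (x t) (u t) t

/-- `(u,x)` is feasible for the MSOP with horizon `T` initialized at `x0` at time `s`. -/
def FeasFrom {α β : Type*} (T : ℕ) (f : α → β → ℕ → α) (X : ℕ → Set α)
    (U : Set β) (x0 : α) (s : ℕ) (u : ℕ → β) (x : ℕ → α) : Prop :=
  x s = x0 ∧ (∀ t, s ≤ t → t ≤ T → x t ∈ X t) ∧
    ∀ t, s ≤ t → t < T → u t ∈ U ∧ x (t + 1) = f (x t) (u t) t

lemma nest_succ {α β : Type*} (φ : ℕ → α → β → ℝ → ℝ) (φT : α → ℝ)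
    (u : ℕ → β) (x : ℕ → α) (t k : ℕ) :
    nest φ φT u x t (k + 1) = φ t (x t) (u t) (nest φ φT u x (t + 1) k) := rfl

lemma nest_congr {α β : Type*} (φ : ℕ → α → β → ℝ → ℝ) (φT : α → ℝ)
    {u u' : ℕ → β} {x x' : ℕ → α} :
    ∀ (j s : ℕ), (∀ t, s ≤ t → t ≤ s + j → x t = x' t) →
      (∀ t, s ≤ t → t < s + j → u t = u' t) →
      nest φ φT u x s j = nest φ φT u' x' s j := by
  intro j
  induction j with
  | zero => intro s hx _; simp only [nest, hx s le_rfl (by omega)]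
  | succ j ih =>
      intro s hx hu
      rw [nest_succ, nest_succ, hx s le_rfl (by omega), hu s le_rfl (by omega),
        ih (s + 1) (fun t h1 h2 => hx t (by omega) (by omega))
          (fun t h1 h2 => hu t (by omega) (by omega))]

lemma nest_mem_imSet {α β : Type*} (φ : ℕ → α → β → ℝ → ℝ) (φT : α → ℝ)
    (X : ℕ → Set α) (U : Set β) {u : ℕ → β} {xs : ℕ → α} :
    ∀ (j s : ℕ), (∀ t, s ≤ t → t ≤ s + j → xs t ∈ X t) →
      (∀ t, s ≤ t → t < s + j → u t ∈ U) →
      nest φ φT u xs s j ∈ imSet φ φT X U s j := by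
  intro j
  induction j with
  | zero => intro s hX _; exact ⟨xs s, hX s le_rfl (by omega), rfl⟩
  | succ j ih =>
      intro s hX hU
      exact ⟨xs s, hX s le_rfl (by omega), u s, hU s le_rfl (by omega),
        nest φ φT u xs (s + 1) j,
        ih (s + 1) (fun t h1 h2 => hX t (by omega) (by omega))
          (fun t h1 h2 => hU t (by omega) (by omega)), rfl⟩

lemma gamSeq_memX {α β : Type*} {T : ℕ} {f : α → β → ℕ → α} {X : ℕ → Set α}
    {U : Set β} {x0 : α} {s : ℕ} {u : ℕ → β} {xs : ℕ → α}
    (h : GamSeq T f X U x0 s u xs) (hx0 : x0 ∈ X s) :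
    ∀ t, s ≤ t → t ≤ T → xs t ∈ X t := by
  intro t hst
  induction t, hst using Nat.le_induction with
  | base => intro _; rw [h.1]; exact hx0
  | succ t hst ih => intro h1; exact (h.2 t hst (by omega)).2.2

lemma exists_gamSeq {α β : Type*} [Nonempty β] (T : ℕ) (f : α → β → ℕ → α)
    (X : ℕ → Set α) (U : Set β)
    (hGam : ∀ t, t < T → ∀ a ∈ X t, ∃ b ∈ U, f a b t ∈ X (t + 1))
    (s : ℕ) (x0 : α) (hx0 : x0 ∈ X s) : ∃ u xs, GamSeq T f X U x0 s u xs := by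
  classical
  set sel : ℕ → α → β := fun t a =>
    if h : t < T ∧ a ∈ X t then (hGam t h.1 a h.2).choose else Classical.arbitrary β
    with hsel
  have hselP : ∀ t a, t < T → a ∈ X t → sel t a ∈ U ∧ f a (sel t a) t ∈ X (t + 1) := by
    intro t a h1 h2
    have h : t < T ∧ a ∈ X t := ⟨h1, h2⟩
    rw [hsel]
    simp only [dif_pos h]
    obtain ⟨hb, hfb⟩ := (hGam t h.1 a h.2).choose_spec
    exact ⟨hb, hfb⟩
  set g : ℕ → α := fun j => Nat.rec x0 (fun j a => f a (sel (s + j) a) (s + j)) j with hg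
  have hg0 : g 0 = x0 := rfl
  have hgs : ∀ j, g (j + 1) = f (g j) (sel (s + j) (g j)) (s + j) := fun j => rfl
  have hmem : ∀ j, s + j ≤ T → g j ∈ X (s + j) := by
    intro j
    induction j with
    | zero => intro _; exact hx0
    | succ j ih =>
        intro h1
        rw [hgs]
        exact (hselP (s + j) (g j) (by omega) (ih (by omega))).2
  refine ⟨fun t => sel t (g (t - s)), fun t => g (t - s), ?_, ?_⟩
  · simp [hg0]
  · intro t h1 h2
    have hts : s + (t - s) = t := by omega
    have hxt : g (t - s) ∈ X t := by have := hmem (t - s) (by omega); rwa [hts] at this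
    have hP := hselP t (g (t - s)) h2 hxt
    have h3 : t + 1 - s = (t - s) + 1 := by omega
    refine ⟨hP.1, ?_, ?_⟩
    · show g (t + 1 - s) = f (g (t - s)) (sel t (g (t - s))) t
      rw [h3, hgs, hts]
    · have h4 := hmem ((t - s) + 1) (by omega)
      rw [show s + ((t - s) + 1) = t + 1 from by omega] at h4
      show g (t + 1 - s) ∈ X (t + 1)
      rw [h3]
      exact h4

lemma phi_sInf_aux {n m : ℕ} {T : ℕ} {X : ℕ → Set (Fin n → ℝ)} {U : Set (Fin m → ℝ)}
    {f : (Fin n → ℝ) → (Fin m → ℝ) → ℕ → (Fin n → ℝ)}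
    {φ : ℕ → (Fin n → ℝ) → (Fin m → ℝ) → ℝ → ℝ} {φT : (Fin n → ℝ) → ℝ}
    (hMono : MonoRep T X U φ φT) (hUSC : USCRep T X U φ φT) (hBdd : BddRep T X U φ φT)
    (hGam : ∀ t, t < T → ∀ a ∈ X t, ∃ b ∈ U, f a b t ∈ X (t + 1))
    {k : ℕ} (hk : k < T) {x : Fin n → ℝ} (hx : x ∈ X k)
    {b : Fin m → ℝ} (hb : b ∈ U) (hfb : f x b k ∈ X (k + 1)) :
    ∃ z : ℕ → ℝ,
      (∀ i, z i ∈ {w : ℝ | ∃ u xs, GamSeq T f X U (f x b k) (k + 1) u xs ∧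
          w = nest φ φT u xs (k + 1) (T - (k + 1))}) ∧
      (∀ i, z i ∈ imSet φ φT X U (k + 1) (T - (k + 1))) ∧
      Tendsto (fun i => φ k x b (z i)) atTop
        (nhds (φ k x b (sInf {w : ℝ | ∃ u xs, GamSeq T f X U (f x b k) (k + 1) u xs ∧
          w = nest φ φT u xs (k + 1) (T - (k + 1))}))) ∧
      ∀ w ∈ {w : ℝ | ∃ u xs, GamSeq T f X U (f x b k) (k + 1) u xs ∧
          w = nest φ φT u xs (k + 1) (T - (k + 1))},
        φ k x b (sInf {w : ℝ | ∃ u xs, GamSeq T f X U (f x b k) (k + 1) u xs ∧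
          w = nest φ φT u xs (k + 1) (T - (k + 1))}) ≤ φ k x b w := by
  set S : Set ℝ := {w : ℝ | ∃ u xs, GamSeq T f X U (f x b k) (k + 1) u xs ∧
      w = nest φ φT u xs (k + 1) (T - (k + 1))} with hSdef
  have hSsub : S ⊆ imSet φ φT X U (k + 1) (T - (k + 1)) := by
    rintro w ⟨u, xs, hg, rfl⟩
    have hX := gamSeq_memX hg hfb
    exact nest_mem_imSet φ φT X U (T - (k + 1)) (k + 1)
      (fun t h1 h2 => hX t h1 (by omega))
      (fun t h1 h2 => (hg.2 t h1 (by omega)).1)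
  have hSne : S.Nonempty := by
    obtain ⟨u, xs, hg⟩ := exists_gamSeq T f X U hGam (k + 1) (f x b k) hfb
    exact ⟨_, u, xs, hg, rfl⟩
  obtain ⟨R1, hR1pos, hR1⟩ := hBdd (k + 1) (by omega)
  have hSbdd : BddBelow S :=
    ⟨-R1, fun w hw => le_of_lt (abs_lt.mp (hR1 w (hSsub hw))).1⟩
  obtain ⟨z, hzanti, hztend, hzmem⟩ := exists_seq_tendsto_sInf hSne hSbdd
  have hzim : ∀ i, z i ∈ imSet φ φT X U (k + 1) (T - (k + 1)) :=
    fun i => hSsub (hzmem i)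
  have htend := hUSC k hk x hx b hb z hzim (fun i => hzanti (Nat.le_succ i)) (sInf S) hztend
  refine ⟨z, hzmem, hzim, htend, ?_⟩
  intro w hw
  rcases eq_or_lt_of_le (csInf_le hSbdd hw) with heq | hlt
  · rw [heq]
  · refine le_of_tendsto htend ?_
    filter_upwards [hztend.eventually_lt_const hlt] with i hi
    exact hMono k hk x hx b hb w (hSsub hw) (z i) (hzim i) hi.le

/-- For a naturally monotonically backward separable cost with
nonempty feasible input sets, the order of the infimum and the composition of
representation maps can be interchanged: the nested infimum equals the joint
infimum over feasible input sequences `Γ_{x,[k,T-1]}`. -/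
theorem nested_inf_eq_joint_inf
    {n m : ℕ} (T : ℕ) (hT : 1 ≤ T)
    (X : ℕ → Set (Fin n → ℝ)) (U : Set (Fin m → ℝ))
    (f : (Fin n → ℝ) → (Fin m → ℝ) → ℕ → (Fin n → ℝ))
    (J : (ℕ → Fin m → ℝ) → (ℕ → Fin n → ℝ) → ℝ)
    (φ : ℕ → (Fin n → ℝ) → (Fin m → ℝ) → ℝ → ℝ) (φT : (Fin n → ℝ) → ℝ)
    (hRep : IsRep T X U J φ φT) (hMono : MonoRep T X U φ φT)
    (hUSC : USCRep T X U φ φT) (hBdd : BddRep T X U φ φT)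
    (hGam : ∀ t, t < T → ∀ a ∈ X t, ∃ b ∈ U, f a b t ∈ X (t + 1))
    (k : ℕ) (hk : k < T) (x : Fin n → ℝ) (hx : x ∈ X k) :
    sInf {y : ℝ | ∃ b ∈ U, f x b k ∈ X (k + 1) ∧
        y = φ k x b (sInf {w : ℝ |
          ∃ u xs, GamSeq T f X U (f x b k) (k + 1) u xs ∧
            w = nest φ φT u xs (k + 1) (T - (k + 1))})} =
      sInf {y : ℝ | ∃ u xs, GamSeq T f X U x k u xs ∧
        y = nest φ φT u xs k (T - k)} := by
  have hTk : T - k = (T - (k + 1)) + 1 := by omega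
  obtain ⟨R0, hR0pos, hR0⟩ := hBdd k hk.le
  set Rset : Set ℝ := {y : ℝ | ∃ u xs, GamSeq T f X U x k u xs ∧
      y = nest φ φT u xs k (T - k)} with hRdef
  have hRsub : Rset ⊆ imSet φ φT X U k (T - k) := by
    rintro y ⟨u, xs, hg, rfl⟩
    have hX := gamSeq_memX hg hx
    exact nest_mem_imSet φ φT X U (T - k) k
      (fun t h1 h2 => hX t h1 (by omega))
      (fun t h1 h2 => (hg.2 t h1 (by omega)).1)
  have hRbdd : BddBelow Rset :=
    ⟨-R0, fun y hy => le_of_lt (abs_lt.mp (hR0 y (hRsub hy))).1⟩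
  have hRne : Rset.Nonempty := by
    obtain ⟨u, xs, hg⟩ := exists_gamSeq T f X U hGam k x hx
    exact ⟨_, u, xs, hg, rfl⟩
  refine le_antisymm ?_ ?_
  · -- sInf LHS ≤ sInf Rset
    refine le_csInf hRne ?_
    rintro r ⟨u, xs, hg, rfl⟩
    have h1 := hg.2 k le_rfl hk
    have hxk : xs k = x := hg.1
    have hb : u k ∈ U := h1.1
    have hfb : f x (u k) k ∈ X (k + 1) := by
      rw [← hxk, ← h1.2.1]; exact h1.2.2
    obtain ⟨z, hzmem, hzim, htend, hkey⟩ :=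
      phi_sInf_aux hMono hUSC hBdd hGam hk hx hb hfb
    have hwS : nest φ φT u xs (k + 1) (T - (k + 1)) ∈
        {w : ℝ | ∃ u' xs', GamSeq T f X U (f x (u k) k) (k + 1) u' xs' ∧
          w = nest φ φT u' xs' (k + 1) (T - (k + 1))} := by
      refine ⟨u, xs, ⟨?_, fun t ht1 ht2 => hg.2 t (by omega) ht2⟩, rfl⟩
      rw [h1.2.1, hxk]
    have hLbddmem : φ k x (u k)
        (sInf {w : ℝ | ∃ u' xs', GamSeq T f X U (f x (u k) k) (k + 1) u' xs' ∧
          w = nest φ φT u' xs' (k + 1) (T - (k + 1))}) ∈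
        {y : ℝ | ∃ b ∈ U, f x b k ∈ X (k + 1) ∧
          y = φ k x b (sInf {w : ℝ | ∃ u' xs', GamSeq T f X U (f x b k) (k + 1) u' xs' ∧
            w = nest φ φT u' xs' (k + 1) (T - (k + 1))})} :=
      ⟨u k, hb, hfb, rfl⟩
    have hLbdd : BddBelow {y : ℝ | ∃ b ∈ U, f x b k ∈ X (k + 1) ∧
        y = φ k x b (sInf {w : ℝ | ∃ u' xs', GamSeq T f X U (f x b k) (k + 1) u' xs' ∧
          w = nest φ φT u' xs' (k + 1) (T - (k + 1))})} := by
      refine ⟨-R0, ?_⟩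
      rintro y ⟨b', hb', hfb', rfl⟩
      obtain ⟨z', hzmem', hzim', htend', _⟩ :=
        phi_sInf_aux hMono hUSC hBdd hGam hk hx hb' hfb'
      refine ge_of_tendsto htend' (Eventually.of_forall fun i => ?_)
      have him : φ k x b' (z' i) ∈ imSet φ φT X U k (T - k) := by
        rw [hTk]; exact ⟨x, hx, b', hb', z' i, hzim' i, rfl⟩
      exact le_of_lt (abs_lt.mp (hR0 _ him)).1
    refine le_trans (csInf_le hLbdd hLbddmem) ?_
    have : nest φ φT u xs k (T - k) =
        φ k x (u k) (nest φ φT u xs (k + 1) (T - (k + 1))) := by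
      rw [hTk, nest_succ, hxk]
    rw [this]
    exact hkey _ hwS
  · -- sInf Rset ≤ sInf LHS
    refine le_csInf ?_ ?_
    · obtain ⟨b, hb, hfb⟩ := hGam k hk x hx
      exact ⟨_, b, hb, hfb, rfl⟩
    rintro y ⟨b, hb, hfb, rfl⟩
    obtain ⟨z, hzmem, hzim, htend, _⟩ :=
      phi_sInf_aux hMono hUSC hBdd hGam hk hx hb hfb
    refine ge_of_tendsto htend (Eventually.of_forall fun i => ?_)
    obtain ⟨ui, xsi, hgi, hzi⟩ := hzmem i
    set u' : ℕ → Fin m → ℝ := fun t => if t = k then b else ui t with hu'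
    set xs' : ℕ → Fin n → ℝ := fun t => if t = k then x else xsi t with hxs'
    have huk' : u' k = b := if_pos rfl
    have hxk' : xs' k = x := if_pos rfl
    have hxsag : ∀ t : ℕ, t ≠ k → xs' t = xsi t := fun t ht => if_neg ht
    have huag : ∀ t : ℕ, t ≠ k → u' t = ui t := fun t ht => if_neg ht
    have hg' : GamSeq T f X U x k u' xs' := by
      constructor
      · exact hxk'
      · intro t ht1 ht2
        rcases eq_or_lt_of_le ht1 with rfl | htk
        · refine ⟨huk' ▸ hb, ?_, ?_⟩
          · rw [hxsag (k + 1) (by omega), hxk', huk', hgi.1]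
          · rw [hxsag (k + 1) (by omega), hgi.1]; exact hfb
        · have h2 := hgi.2 t htk ht2
          refine ⟨(huag t (by omega)) ▸ h2.1, ?_, ?_⟩
          · rw [hxsag (t + 1) (by omega), hxsag t (by omega), huag t (by omega)]
            exact h2.2.1
          · rw [hxsag (t + 1) (by omega)]
            exact h2.2.2
    have hval : nest φ φT u' xs' k (T - k) = φ k x b (z i) := by
      rw [hTk, nest_succ]
      rw [hxk', huk', hzi,
        nest_congr (u := u') (u' := ui) (x := xs') (x' := xsi) φ φT (T - (k + 1)) (k + 1)
          (fun t h1 _ => hxsag t (by omega))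
          (fun t h1 _ => huag t (by omega))]
    exact csInf_le hRbdd ⟨u', xs', hg', hval.symm⟩
end

section
/- Suppose J is naturally monotonically backward separable with representation maps {φ_t}_{t=0}^T and Γ_{x,t} ≠ ∅ for all x ∈ X_t and t ∈ {0,…,T−1}. If F : ℝ^n × {0,…,T} → ℝ satisfies the Generalized Bellman Equation, i.e. F(x,T) = φ_T(x) for all x ∈ X_T and F(x,t) = inf_{u ∈ Γ_{x,t}} φ_t(x, u, F(f(x,u,t), t+1)) for all x ∈ X_t and t ∈ {0,…,T−1}, then F is a value function of the MSOP: for all t ∈ {0,…,T−1} and x ∈ X_t, F(x,t) = inf_{(u(t),…,u(T−1)) ∈ Γ_{x,[t,T−1]}} φ_t(x(t),u(t), φ_{t+1}(x(t+1),u(t+1), …, φ_T(x(T))…)), where x(t) = x and x(k+1) = f(x(k),u(k),k). -/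
open Set Filter MeasureTheory

namespace GBEaux

variable {α β : Type*}

lemma nest_congr (φ : ℕ → α → β → ℝ → ℝ) (φT : α → ℝ) {u u' : ℕ → β} {x x' : ℕ → α} :
    ∀ (k t : ℕ), (∀ s, t ≤ s → s < t + k → u s = u' s) →
      (∀ s, t ≤ s → s ≤ t + k → x s = x' s) →
      nest φ φT u x t k = nest φ φT u' x' t k
  | 0, t, _, hx => by simp [nest, hx t le_rfl (by omega)]
  | k + 1, t, hu, hx => by
      simp only [nest]
      rw [hx t le_rfl (by omega), hu t le_rfl (by omega),
        nest_congr φ φT k (t + 1) (fun s h1 h2 => hu s (by omega) (by omega))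
          (fun s h1 h2 => hx s (by omega) (by omega))]

lemma GamSeq.tail {T : ℕ} {f : α → β → ℕ → α} {X : ℕ → Set α} {U : Set β}
    {a : α} {s : ℕ} {u : ℕ → β} {xs : ℕ → α}
    (h : GamSeq T f X U a s u xs) : GamSeq T f X U (xs (s + 1)) (s + 1) u xs :=
  ⟨rfl, fun t ht1 ht2 => h.2 t (by omega) ht2⟩

lemma nest_mem_imSet (φ : ℕ → α → β → ℝ → ℝ) (φT : α → ℝ) (X : ℕ → Set α) (U : Set β)
    (f : α → β → ℕ → α) (T : ℕ) :
    ∀ (k t : ℕ), t + k = T → ∀ (a : α), a ∈ X t → ∀ (u : ℕ → β) (xs : ℕ → α),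
      GamSeq T f X U a t u xs → nest φ φT u xs t k ∈ imSet φ φT X U t k
  | 0, t, _, a, ha, u, xs, h => ⟨a, ha, by simp [nest, h.1]⟩
  | k + 1, t, hk, a, ha, u, xs, h => by
      obtain ⟨hu, hx, hmem⟩ := h.2 t le_rfl (by omega)
      exact ⟨xs t, by rw [h.1]; exact ha, u t, hu, nest φ φT u xs (t + 1) k,
        nest_mem_imSet φ φT X U f T k (t + 1) (by omega) _ hmem u xs (GamSeq.tail h), rfl⟩

lemma feas_exists (f : α → β → ℕ → α) (X : ℕ → Set α) (U : Set β) (T : ℕ) (b0 : β)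
    (hGam : ∀ t, t < T → ∀ a ∈ X t, ∃ b ∈ U, f a b t ∈ X (t + 1)) :
    ∀ (k t : ℕ), t + k = T → ∀ a ∈ X t, ∃ u xs, GamSeq T f X U a t u xs
  | 0, t, hk, a, _ =>
      ⟨fun _ => b0, fun _ => a, rfl, fun s hs hsT => absurd hsT (by omega)⟩
  | k + 1, t, hk, a, ha => by
      obtain ⟨b, hb, hfb⟩ := hGam t (by omega) a ha
      obtain ⟨u, xs, hG⟩ := feas_exists f X U T b0 hGam k (t + 1) (by omega) (f a b t) hfb
      refine ⟨Function.update u t b, Function.update xs t a,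
        by simp, ?_⟩
      intro s hs hsT
      rcases Nat.eq_or_lt_of_le hs with h | h
      · subst h
        have h1 : t + 1 ≠ t := by omega
        simp only [Function.update_self, Function.update_of_ne h1]
        exact ⟨hb, by rw [hG.1], by rw [hG.1]; exact hfb⟩
      · have h1 : s ≠ t := by omega
        have h2 : s + 1 ≠ t := by omega
        simp only [Function.update_of_ne h1, Function.update_of_ne h2]
        exact hG.2 s (by omega) hsT

/-- The set of attainable tail costs from `(t, a)`. -/
def Sset (T : ℕ) (f : α → β → ℕ → α) (X : ℕ → Set α) (U : Set β)
    (φ : ℕ → α → β → ℝ → ℝ) (φT : α → ℝ) (t : ℕ) (a : α) : Set ℝ :=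
  {y | ∃ u xs, GamSeq T f X U a t u xs ∧ y = nest φ φT u xs t (T - t)}

lemma Sset_subset_imSet (T : ℕ) (f : α → β → ℕ → α) (X : ℕ → Set α) (U : Set β)
    (φ : ℕ → α → β → ℝ → ℝ) (φT : α → ℝ) {t : ℕ} {a : α} (ht : t ≤ T) (ha : a ∈ X t) :
    Sset T f X U φ φT t a ⊆ imSet φ φT X U t (T - t) := by
  rintro y ⟨u, xs, hG, rfl⟩
  exact nest_mem_imSet φ φT X U f T (T - t) t (by omega) a ha u xs hG

lemma prepend_mem (T : ℕ) (f : α → β → ℕ → α) (X : ℕ → Set α) (U : Set β)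
    (φ : ℕ → α → β → ℝ → ℝ) (φT : α → ℝ) {t : ℕ} {a : α} {b : β}
    (htT : t < T) (hb : b ∈ U) (hfb : f a b t ∈ X (t + 1)) {y : ℝ}
    (hy : y ∈ Sset T f X U φ φT (t + 1) (f a b t)) :
    φ t a b y ∈ Sset T f X U φ φT t a := by
  obtain ⟨u, xs, hG, rfl⟩ := hy
  refine ⟨Function.update u t b, Function.update xs t a,
    ⟨by simp, ?_⟩, ?_⟩
  · intro s hs hsT
    rcases Nat.eq_or_lt_of_le hs with h | h
    · subst h
      have h1 : t + 1 ≠ t := by omega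
      simp only [Function.update_self, Function.update_of_ne h1]
      exact ⟨hb, by rw [hG.1], by rw [hG.1]; exact hfb⟩
    · have h1 : s ≠ t := by omega
      have h2 : s + 1 ≠ t := by omega
      simp only [Function.update_of_ne h1, Function.update_of_ne h2]
      exact hG.2 s (by omega) hsT
  · have h1 : T - t = (T - (t + 1)) + 1 := by omega
    rw [h1]
    simp only [nest, Function.update_self]
    congr 1
    exact (nest_congr φ φT (u := u) (u' := Function.update u t b)
      (x := xs) (x' := Function.update xs t a) (T - (t + 1)) (t + 1)
      (fun s hs _ => (Function.update_of_ne (by omega : s ≠ t) b u).symm)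
      (fun s hs _ => (Function.update_of_ne (by omega : s ≠ t) a xs).symm))

end GBEaux

/-- If the cost is naturally monotonically backward separable,
the feasible input sets are nonempty, and `F` satisfies the Generalized Bellman
Equation, then `F` is a value function of the MSOP: for every `t < T` and
`x ∈ X_t`, `F(x,t)` equals the infimum of the backward-composed tail cost over
all feasible input sequences in `Γ_{x,[t,T-1]}`. -/
theorem GBE_gives_value_function
    {n m : ℕ} (T : ℕ) (hT : 1 ≤ T)
    (X : ℕ → Set (Fin n → ℝ)) (U : Set (Fin m → ℝ))
    (f : (Fin n → ℝ) → (Fin m → ℝ) → ℕ → (Fin n → ℝ))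
    (J : (ℕ → Fin m → ℝ) → (ℕ → Fin n → ℝ) → ℝ)
    (φ : ℕ → (Fin n → ℝ) → (Fin m → ℝ) → ℝ → ℝ) (φT : (Fin n → ℝ) → ℝ)
    (hRep : IsRep T X U J φ φT) (hMono : MonoRep T X U φ φT)
    (hUSC : USCRep T X U φ φT) (hBdd : BddRep T X U φ φT)
    (hGam : ∀ t, t < T → ∀ a ∈ X t, ∃ b ∈ U, f a b t ∈ X (t + 1))
    (F : (Fin n → ℝ) → ℕ → ℝ)
    (hFT : ∀ a ∈ X T, F a T = φT a)
    (hF : ∀ t, t < T → ∀ a ∈ X t, F a t =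
      sInf {y : ℝ | ∃ b ∈ U, f a b t ∈ X (t + 1) ∧
        y = φ t a b (F (f a b t) (t + 1))}) :
    ∀ t, t < T → ∀ a ∈ X t, F a t =
      sInf {y : ℝ | ∃ u xs, GamSeq T f X U a t u xs ∧
        y = nest φ φT u xs t (T - t)} := by
  classical
  suffices key : ∀ k t, t + k = T → ∀ a ∈ X t,
      F a t = sInf (GBEaux.Sset T f X U φ φT t a) by
    intro t ht a ha
    exact key (T - t) t (by omega) a ha
  intro k
  induction k with
  | zero =>
    intro t htk a ha
    have ht : T = t := by omega
    subst ht
    have hset : GBEaux.Sset T f X U φ φT T a = {φT a} := by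
      ext y
      simp only [GBEaux.Sset, Set.mem_setOf_eq, Set.mem_singleton_iff]
      constructor
      · rintro ⟨u, xs, hG, rfl⟩
        simp [Nat.sub_self, nest, hG.1]
      · rintro rfl
        exact ⟨fun _ => 0, fun _ => a, ⟨rfl, fun s hs hsT => absurd hsT (by omega)⟩,
          by simp [Nat.sub_self, nest]⟩
    rw [hset, csInf_singleton]
    exact hFT a ha
  | succ k IH =>
    intro t htk a ha
    have htT : t < T := by omega
    have hk : T - (t + 1) = k := by omega
    have hk1 : T - t = k + 1 := by omega
    have hFa : F a t = sInf {y : ℝ | ∃ b ∈ U, f a b t ∈ X (t + 1) ∧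
        y = φ t a b (F (f a b t) (t + 1))} := hF t htT a ha
    obtain ⟨R, hR, hRb⟩ := hBdd t (le_of_lt htT)
    -- basic facts about the attainable-cost sets
    have hbddS : ∀ t', t' ≤ T → ∀ a' ∈ X t', BddBelow (GBEaux.Sset T f X U φ φT t' a') := by
      intro t' ht' a' ha'
      obtain ⟨R', _, hRb'⟩ := hBdd t' ht'
      exact ⟨-R', fun y hy => le_of_lt (abs_lt.mp
        (hRb' y (GBEaux.Sset_subset_imSet T f X U φ φT ht' ha' hy))).1⟩
    have hneS : ∀ t', t' ≤ T → ∀ a' ∈ X t', (GBEaux.Sset T f X U φ φT t' a').Nonempty := by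
      intro t' ht' a' ha'
      obtain ⟨u, xs, hG⟩ := GBEaux.feas_exists f X U T 0 hGam (T - t') t' (by omega) a' ha'
      exact ⟨_, u, xs, hG, rfl⟩
    have hsub1 : ∀ a' ∈ X (t + 1),
        GBEaux.Sset T f X U φ φT (t + 1) a' ⊆ imSet φ φT X U (t + 1) (T - (t + 1)) :=
      fun a' ha' => GBEaux.Sset_subset_imSet T f X U φ φT (by omega) ha'
    have hSne := hneS t (le_of_lt htT) a ha
    have hSbdd := hbddS t (le_of_lt htT) a ha
    -- key per-control facts
    have main : ∀ b ∈ U, f a b t ∈ X (t + 1) →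
        (-R ≤ φ t a b (F (f a b t) (t + 1)) ∧
         sInf (GBEaux.Sset T f X U φ φT t a) ≤ φ t a b (F (f a b t) (t + 1)) ∧
         ∀ w ∈ GBEaux.Sset T f X U φ φT (t + 1) (f a b t),
           φ t a b (F (f a b t) (t + 1)) ≤ φ t a b w) := by
      intro b hb hfb
      obtain ⟨z, hza, hzl, hzm⟩ :=
        exists_seq_tendsto_sInf (hneS (t + 1) (by omega) _ hfb) (hbddS (t + 1) (by omega) _ hfb)
      have hFx2 : F (f a b t) (t + 1) = sInf (GBEaux.Sset T f X U φ φT (t + 1) (f a b t)) :=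
        IH (t + 1) (by omega) _ hfb
      have hzi : ∀ i, z i ∈ imSet φ φT X U (t + 1) (T - (t + 1)) :=
        fun i => hsub1 _ hfb (hzm i)
      have husc : Tendsto (fun i => φ t a b (z i)) atTop
          (nhds (φ t a b (sInf (GBEaux.Sset T f X U φ φT (t + 1) (f a b t))))) :=
        hUSC t htT a ha b hb z hzi (fun i => hza (Nat.le_succ i)) _ hzl
      rw [hFx2]
      refine ⟨?_, ?_, ?_⟩
      · refine ge_of_tendsto' husc (fun i => ?_)
        have hmem : φ t a b (z i) ∈ imSet φ φT X U t (T - t) := by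
          rw [hk1]
          exact ⟨a, ha, b, hb, z i, by rw [← hk]; exact hzi i, rfl⟩
        exact le_of_lt (abs_lt.mp (hRb _ hmem)).1
      · refine ge_of_tendsto' husc (fun i => csInf_le hSbdd ?_)
        exact GBEaux.prepend_mem T f X U φ φT htT hb hfb (hzm i)
      · intro w hw
        have hwim : w ∈ imSet φ φT X U (t + 1) (T - (t + 1)) := hsub1 _ hfb hw
        have hsw : sInf (GBEaux.Sset T f X U φ φT (t + 1) (f a b t)) ≤ w :=
          csInf_le (hbddS (t + 1) (by omega) _ hfb) hw
        have hz'i : ∀ i, min (z i) w ∈ imSet φ φT X U (t + 1) (T - (t + 1)) := by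
          intro i
          rcases le_total (z i) w with h | h
          · rw [min_eq_left h]; exact hzi i
          · rw [min_eq_right h]; exact hwim
        have hz'dec : ∀ i, min (z (i + 1)) w ≤ min (z i) w :=
          fun i => min_le_min (hza (Nat.le_succ i)) le_rfl
        have hz'lim : Tendsto (fun i => min (z i) w) atTop
            (nhds (sInf (GBEaux.Sset T f X U φ φT (t + 1) (f a b t)))) := by
          have h := hzl.min (tendsto_const_nhds (x := w) (f := atTop))
          rwa [min_eq_left hsw] at h
        have husc' := hUSC t htT a ha b hb (fun i => min (z i) w) hz'i hz'dec _ hz'lim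
        refine le_of_tendsto' husc' (fun i => ?_)
        exact hMono t htT a ha b hb w hwim (min (z i) w) (hz'i i) (min_le_right _ _)
    have hBne : {y : ℝ | ∃ b ∈ U, f a b t ∈ X (t + 1) ∧
        y = φ t a b (F (f a b t) (t + 1))}.Nonempty := by
      obtain ⟨b, hb, hfb⟩ := hGam t htT a ha
      exact ⟨_, b, hb, hfb, rfl⟩
    have hBbdd : BddBelow {y : ℝ | ∃ b ∈ U, f a b t ∈ X (t + 1) ∧
        y = φ t a b (F (f a b t) (t + 1))} := by
      refine ⟨-R, ?_⟩
      rintro y ⟨b, hb, hfb, rfl⟩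
      exact (main b hb hfb).1
    rw [hFa]
    apply le_antisymm
    · apply le_csInf hSne
      rintro y ⟨u, xs, hG, rfl⟩
      obtain ⟨hub, hxe, hxm⟩ := hG.2 t le_rfl htT
      have hxa : xs t = a := hG.1
      have hfb : f a (u t) t ∈ X (t + 1) := by rw [← hxa, ← hxe]; exact hxm
      have hy : nest φ φT u xs t (T - t)
          = φ t a (u t) (nest φ φT u xs (t + 1) (T - (t + 1))) := by
        rw [hk1]
        simp only [nest]
        rw [hxa, hk]
      rw [hy]
      have hwmem : nest φ φT u xs (t + 1) (T - (t + 1))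
          ∈ GBEaux.Sset T f X U φ φT (t + 1) (f a (u t) t) := by
        refine ⟨u, xs, ?_, rfl⟩
        have htail := GBEaux.GamSeq.tail hG
        rwa [hxe, hxa] at htail
      calc sInf {y : ℝ | ∃ b ∈ U, f a b t ∈ X (t + 1) ∧
              y = φ t a b (F (f a b t) (t + 1))}
          ≤ φ t a (u t) (F (f a (u t) t) (t + 1)) := csInf_le hBbdd ⟨u t, hub, hfb, rfl⟩
        _ ≤ φ t a (u t) (nest φ φT u xs (t + 1) (T - (t + 1))) :=
            (main (u t) hub hfb).2.2 _ hwmem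
    · apply le_csInf hBne
      rintro y ⟨b, hb, hfb, rfl⟩
      exact (main b hb hfb).2.1
end

section
/- Suppose J is naturally monotonically backward separable with representation maps {φ_t}_{t=0}^T, Γ_{x,t} ≠ ∅ for all x ∈ X_t and t ∈ {0,…,T−1}, and V : ℝ^n × {0,…,T} → ℝ satisfies the Generalized Bellman Equation. If the sequences u* = (u*(0),…,u*(T−1)) and x* = (x*(0),…,x*(T)) satisfy x*(0) = x_0, x*(k+1) = f(x*(k),u*(k),k), and u*(k) ∈ arg inf_{u ∈ Γ_{x*(k),k}} φ_k(x*(k), u, V(f(x*(k),u,k), k+1)) for every k ∈ {0,…,T−1}, then (u*, x*) is feasible for the MSOP initialized at x_0 and attains the minimum: J(u*,x*) = inf over all feasible (u,x) of J(u,x). -/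
open Set Filter MeasureTheory

/-- (Sufficient conditions.) Suppose the cost is naturally
monotonically backward separable, feasible input sets are nonempty, and `V`
satisfies the Generalized Bellman Equation. If the pair `(u*, x*)` starts at
`x0`, follows the dynamics, and `u*(k)` minimizes
`u ↦ φ_k(x*(k), u, V(f(x*(k),u,k), k+1))` over `Γ_{x*(k),k}` for every `k < T`,
then `(u*, x*)` is feasible for the MSOP and attains the minimal cost. -/
theorem GBE_sufficient_conditions
    {n m : ℕ} (T : ℕ) (hT : 1 ≤ T)
    (X : ℕ → Set (Fin n → ℝ)) (U : Set (Fin m → ℝ))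
    (f : (Fin n → ℝ) → (Fin m → ℝ) → ℕ → (Fin n → ℝ))
    (x0 : Fin n → ℝ) (hx0 : x0 ∈ X 0)
    (J : (ℕ → Fin m → ℝ) → (ℕ → Fin n → ℝ) → ℝ)
    (φ : ℕ → (Fin n → ℝ) → (Fin m → ℝ) → ℝ → ℝ) (φT : (Fin n → ℝ) → ℝ)
    (hRep : IsRep T X U J φ φT) (hMono : MonoRep T X U φ φT)
    (hUSC : USCRep T X U φ φT) (hBdd : BddRep T X U φ φT)
    (hGam : ∀ t, t < T → ∀ a ∈ X t, ∃ b ∈ U, f a b t ∈ X (t + 1))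
    (V : (Fin n → ℝ) → ℕ → ℝ)
    (hVT : ∀ a ∈ X T, V a T = φT a)
    (hV : ∀ t, t < T → ∀ a ∈ X t, V a t =
      sInf {y : ℝ | ∃ b ∈ U, f a b t ∈ X (t + 1) ∧
        y = φ t a b (V (f a b t) (t + 1))})
    (ustar : ℕ → Fin m → ℝ) (xstar : ℕ → Fin n → ℝ)
    (hinit : xstar 0 = x0)
    (hdyn : ∀ k, k < T → xstar (k + 1) = f (xstar k) (ustar k) k)
    (hargmin : ∀ k, k < T →
      (ustar k ∈ U ∧ f (xstar k) (ustar k) k ∈ X (k + 1)) ∧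
      ∀ b ∈ U, f (xstar k) b k ∈ X (k + 1) →
        φ k (xstar k) (ustar k) (V (f (xstar k) (ustar k) k) (k + 1)) ≤
          φ k (xstar k) b (V (f (xstar k) b k) (k + 1))) :
    Feas T f X U x0 ustar xstar ∧
      J ustar xstar = sInf {y : ℝ | ∃ u x, Feas T f X U x0 u x ∧ y = J u x} := by
  classical
  -- L1: the nested cost of a feasible tail lies in the image set
  have L1 : ∀ d t, t + d ≤ T → ∀ a u x, a ∈ X t → GamSeq T f X U a t u x →
      nest φ φT u x t d ∈ imSet φ φT X U t d := by
    intro d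
    induction d with
    | zero =>
      intro t _ a u x ha hgs
      show φT (x t) ∈ φT '' X t
      exact ⟨x t, by rw [hgs.1]; exact ha, rfl⟩
    | succ d ih =>
      intro t h a u x ha hgs
      have htT : t < T := by omega
      obtain ⟨hu, hx1, hx1X⟩ := hgs.2 t le_rfl htT
      have hshift : GamSeq T f X U (x (t + 1)) (t + 1) u x :=
        ⟨rfl, fun s hs hsT => hgs.2 s (by omega) hsT⟩
      have hmem := ih (t + 1) (by omega) (x (t + 1)) u x hx1X hshift
      show ∃ a ∈ X t, ∃ b ∈ U, ∃ w ∈ imSet φ φT X U (t + 1) d,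
        φ t (x t) (u t) (nest φ φT u x (t + 1) d) = φ t a b w
      refine ⟨x t, by rw [hgs.1]; exact ha, u t, hu, nest φ φT u x (t + 1) d, hmem, ?_⟩
      rfl
  -- main backward induction
  have main : ∀ d t, t + d = T → ∀ a, a ∈ X t →
      ((∃ z : ℕ → ℝ, (∀ i, z i ∈ imSet φ φT X U t d) ∧ (∀ i, z (i + 1) ≤ z i) ∧
        Tendsto z atTop (nhds (V a t))) ∧
       (∀ u x, GamSeq T f X U a t u x → V a t ≤ nest φ φT u x t d)) := by
    intro d
    induction d with
    | zero =>
      intro t hdT a ha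
      have htT : t = T := by omega
      subst htT
      have hVa : V a t = φT a := hVT a ha
      constructor
      · refine ⟨fun _ => φT a, fun _ => ⟨a, ha, rfl⟩, fun _ => le_rfl, ?_⟩
        rw [hVa]; exact tendsto_const_nhds
      · intro u x hgs
        show V a t ≤ φT (x t)
        rw [hgs.1, hVa]
    | succ d ih =>
      intro t hdT a ha
      have htT : t < T := by omega
      have hd1 : T - (t + 1) = d := by omega
      have hd2 : T - t = d + 1 := by omega
      set S := {y : ℝ | ∃ b ∈ U, f a b t ∈ X (t + 1) ∧
        y = φ t a b (V (f a b t) (t + 1))} with hSdef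
      have hVa : V a t = sInf S := hV t htT a ha
      have hSne : S.Nonempty := by
        obtain ⟨b, hb, hbX⟩ := hGam t htT a ha
        exact ⟨_, b, hb, hbX, rfl⟩
      -- every member of S is the decreasing limit of elements of imSet t (d+1)
      have approx : ∀ y ∈ S, ∃ w : ℕ → ℝ,
          (∀ i, w i ∈ imSet φ φT X U t (d + 1)) ∧ (∀ i, w (i + 1) ≤ w i) ∧
          (∀ i, y ≤ w i) ∧ Tendsto w atTop (nhds y) := by
        rintro y ⟨b, hb, hbX, rfl⟩
        obtain ⟨⟨z', hz'mem, hz'step, hz't⟩, -⟩ := ih (t + 1) (by omega) (f a b t) hbX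
        have hz'mem' : ∀ i, z' i ∈ imSet φ φT X U (t + 1) (T - (t + 1)) := by
          rw [hd1]; exact hz'mem
        have hwmem : ∀ i, φ t a b (z' i) ∈ imSet φ φT X U t (d + 1) := by
          intro i
          exact ⟨a, ha, b, hb, z' i, hz'mem i, rfl⟩
        have hwstep : ∀ i, φ t a b (z' (i + 1)) ≤ φ t a b (z' i) := fun i =>
          hMono t htT a ha b hb (z' i) (hz'mem' i) (z' (i + 1)) (hz'mem' (i + 1)) (hz'step i)
        have hwt : Tendsto (fun i => φ t a b (z' i)) atTop
            (nhds (φ t a b (V (f a b t) (t + 1)))) :=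
          hUSC t htT a ha b hb z' hz'mem' hz'step _ hz't
        have hanti : Antitone (fun i => φ t a b (z' i)) := antitone_nat_of_succ_le hwstep
        refine ⟨fun i => φ t a b (z' i), hwmem, hwstep, ?_, hwt⟩
        intro i
        exact le_of_tendsto hwt (eventually_atTop.2 ⟨i, fun j hj => hanti hj⟩)
      obtain ⟨R, hR0, hRb⟩ := hBdd t (by omega)
      rw [hd2] at hRb
      have hSlb : ∀ y ∈ S, -R ≤ y := by
        intro y hy
        obtain ⟨w, hm, -, -, ht'⟩ := approx y hy
        exact ge_of_tendsto ht'
          (Eventually.of_forall fun i => (abs_lt.1 (hRb _ (hm i))).1.le)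
      have hSbdd : BddBelow S := ⟨-R, hSlb⟩
      constructor
      · -- part (1): decreasing approximation of V a t from imSet t (d+1)
        have key : ∀ c, V a t < c →
            ∃ w, w ∈ imSet φ φT X U t (d + 1) ∧ V a t ≤ w ∧ w < c := by
          intro c hc
          rw [hVa] at hc
          obtain ⟨y, hyS, hyc⟩ := exists_lt_of_csInf_lt hSne hc
          obtain ⟨w, hwm, -, hwge, hwt⟩ := approx y hyS
          obtain ⟨i, hi⟩ := (hwt.eventually_lt_const hyc).exists
          refine ⟨w i, hwm i, ?_, hi⟩
          have : V a t ≤ y := by rw [hVa]; exact csInf_le hSbdd hyS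
          exact this.trans (hwge i)
        by_cases hatt : V a t ∈ imSet φ φT X U t (d + 1)
        · exact ⟨fun _ => V a t, fun _ => hatt, fun _ => le_rfl, tendsto_const_nhds⟩
        · have key3 : ∀ c : ℝ, ∃ w, w ∈ imSet φ φT X U t (d + 1) ∧ V a t < w ∧
              (V a t < c → w < c) := by
            intro c
            by_cases hc : V a t < c
            · obtain ⟨w, h1, h2, h3⟩ := key c hc
              exact ⟨w, h1, lt_of_le_of_ne h2 (fun h => hatt (h ▸ h1)), fun _ => h3⟩
            · obtain ⟨w, h1, h2, h3⟩ := key (V a t + 1) (by linarith)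
              exact ⟨w, h1, lt_of_le_of_ne h2 (fun h => hatt (h ▸ h1)),
                fun h => absurd h hc⟩
          choose g hg1 hg2 hg3 using key3
          set z : ℕ → ℝ := fun i => Nat.rec (motive := fun _ => ℝ) (g (V a t + 1))
            (fun i w => g (min w (V a t + (1 / 2) ^ (i + 1)))) i with hzdef
          have hz0 : z 0 = g (V a t + 1) := rfl
          have hzs : ∀ i, z (i + 1) = g (min (z i) (V a t + (1 / 2) ^ (i + 1))) :=
            fun i => rfl
          have hhalf : ∀ i : ℕ, (0 : ℝ) < (1 / 2) ^ i :=
            fun i => pow_pos (by norm_num) i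
          have hinv : ∀ i, V a t < z i ∧ z i ≤ V a t + (1 / 2) ^ i := by
            intro i
            induction i with
            | zero =>
              rw [hz0, pow_zero]
              exact ⟨hg2 _, (hg3 _ (by linarith)).le⟩
            | succ i ihi =>
              rw [hzs i]
              have hc : V a t < min (z i) (V a t + (1 / 2) ^ (i + 1)) :=
                lt_min ihi.1 (by linarith [hhalf (i + 1)])
              exact ⟨hg2 _, (hg3 _ hc).le.trans (min_le_right _ _)⟩
          have hmem : ∀ i, z i ∈ imSet φ φT X U t (d + 1) := by
            intro i
            cases i with
            | zero => rw [hz0]; exact hg1 _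
            | succ i => rw [hzs i]; exact hg1 _
          have hstep : ∀ i, z (i + 1) ≤ z i := by
            intro i
            rw [hzs i]
            have hc : V a t < min (z i) (V a t + (1 / 2) ^ (i + 1)) :=
              lt_min (hinv i).1 (by linarith [hhalf (i + 1)])
            exact (hg3 _ hc).le.trans (min_le_left _ _)
          have htend : Tendsto z atTop (nhds (V a t)) := by
            have hub : Tendsto (fun i : ℕ => V a t + (1 / 2 : ℝ) ^ i) atTop
                (nhds (V a t + 0)) :=
              tendsto_const_nhds.add
                (tendsto_pow_atTop_nhds_zero_of_lt_one (by norm_num) (by norm_num))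
            rw [add_zero] at hub
            exact tendsto_of_tendsto_of_tendsto_of_le_of_le tendsto_const_nhds hub
              (fun i => (hinv i).1.le) (fun i => (hinv i).2)
          exact ⟨z, hmem, hstep, htend⟩
      · -- part (2): V is a lower bound on the nested cost of feasible tails
        intro u x hgs
        obtain ⟨hxa, hprop⟩ := hgs
        obtain ⟨hu, hx1, hx1X⟩ := hprop t le_rfl htT
        have hshift : GamSeq T f X U (x (t + 1)) (t + 1) u x :=
          ⟨rfl, fun s hs hsT => hprop s (by omega) hsT⟩
        have hVle := (ih (t + 1) (by omega) (x (t + 1)) hx1X).2 u x hshift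
        have hfa : f a (u t) t = x (t + 1) := by rw [← hxa]; exact hx1.symm
        have hyS : φ t a (u t) (V (x (t + 1)) (t + 1)) ∈ S := by
          refine ⟨u t, hu, ?_, ?_⟩
          · rw [hfa]; exact hx1X
          · rw [hfa]
        have h1 : V a t ≤ φ t a (u t) (V (x (t + 1)) (t + 1)) := by
          rw [hVa]; exact csInf_le hSbdd hyS
        have hN : nest φ φT u x (t + 1) d ∈ imSet φ φT X U (t + 1) (T - (t + 1)) := by
          rw [hd1]
          exact L1 d (t + 1) (by omega) (x (t + 1)) u x hx1X hshift
        have h2 : φ t a (u t) (V (x (t + 1)) (t + 1)) ≤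
            φ t a (u t) (nest φ φT u x (t + 1) d) := by
          rcases eq_or_lt_of_le hVle with heq | hlt
          · rw [heq]
          · obtain ⟨⟨z', hz'mem, hz'step, hz't⟩, -⟩ :=
              ih (t + 1) (by omega) (x (t + 1)) hx1X
            have hz'mem' : ∀ i, z' i ∈ imSet φ φT X U (t + 1) (T - (t + 1)) := by
              rw [hd1]; exact hz'mem
            have hev : ∀ᶠ i in atTop, φ t a (u t) (z' i) ≤
                φ t a (u t) (nest φ φT u x (t + 1) d) := by
              filter_upwards [hz't.eventually_lt_const hlt] with i hi
              exact hMono t htT a ha (u t) hu _ hN (z' i) (hz'mem' i) hi.le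
            exact le_of_tendsto (hUSC t htT a ha (u t) hu z' hz'mem' hz'step _ hz't) hev
        show V a t ≤ φ t (x t) (u t) (nest φ φT u x (t + 1) d)
        rw [hxa]
        exact h1.trans h2
  -- feasibility of the optimal pair
  have hxX : ∀ t, t ≤ T → xstar t ∈ X t := by
    intro t
    induction t with
    | zero => intro _; rw [hinit]; exact hx0
    | succ k ihk =>
      intro h
      have hk : k < T := by omega
      rw [hdyn k hk]
      exact (hargmin k hk).1.2
  have hfeas : Feas T f X U x0 ustar xstar :=
    ⟨hinit, hxX, fun t ht => ⟨(hargmin t ht).1.1, hdyn t ht⟩⟩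
  -- the optimal trajectory attains V along the chain
  have chain : ∀ d t, t + d = T → V (xstar t) t = nest φ φT ustar xstar t d := by
    intro d
    induction d with
    | zero =>
      intro t h
      have ht : t = T := by omega
      subst ht
      show V (xstar t) t = φT (xstar t)
      exact hVT _ (hxX t le_rfl)
    | succ d ihd =>
      intro t h
      have htT : t < T := by omega
      set S := {y : ℝ | ∃ b ∈ U, f (xstar t) b t ∈ X (t + 1) ∧
        y = φ t (xstar t) b (V (f (xstar t) b t) (t + 1))} with hSdef
      have hVa : V (xstar t) t = sInf S := hV t htT (xstar t) (hxX t (by omega))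
      have heS : φ t (xstar t) (ustar t) (V (f (xstar t) (ustar t) t) (t + 1)) ∈ S :=
        ⟨ustar t, (hargmin t htT).1.1, (hargmin t htT).1.2, rfl⟩
      have hlb : ∀ y ∈ S,
          φ t (xstar t) (ustar t) (V (f (xstar t) (ustar t) t) (t + 1)) ≤ y := by
        rintro y ⟨b, hb, hbX, rfl⟩
        exact (hargmin t htT).2 b hb hbX
      have hinf : sInf S = φ t (xstar t) (ustar t)
          (V (f (xstar t) (ustar t) t) (t + 1)) :=
        le_antisymm (csInf_le ⟨_, hlb⟩ heS) (le_csInf ⟨_, heS⟩ hlb)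
      show V (xstar t) t = φ t (xstar t) (ustar t) (nest φ φT ustar xstar (t + 1) d)
      rw [hVa, hinf, ← hdyn t htT, ihd (t + 1) (by omega)]
  have hJstar : J ustar xstar = V x0 0 := by
    rw [hRep ustar xstar (fun t ht => (hargmin t ht).1.1) hxX, ← hinit]
    exact (chain T 0 (by omega)).symm
  -- V x0 0 is a lower bound over all feasible pairs
  have hlbF : ∀ y ∈ {y : ℝ | ∃ u x, Feas T f X U x0 u x ∧ y = J u x},
      J ustar xstar ≤ y := by
    rintro y ⟨u, x, hfx, rfl⟩
    rw [hJstar]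
    have hgs : GamSeq T f X U x0 0 u x :=
      ⟨hfx.1, fun t _ ht => ⟨(hfx.2.2 t ht).1, (hfx.2.2 t ht).2, hfx.2.1 (t + 1) ht⟩⟩
    have := (main T 0 (by omega) x0 hx0).2 u x hgs
    rwa [← hRep u x (fun t ht => (hfx.2.2 t ht).1) hfx.2.1] at this
  have hmemF : J ustar xstar ∈ {y : ℝ | ∃ u x, Feas T f X U x0 u x ∧ y = J u x} :=
    ⟨ustar, xstar, hfeas, rfl⟩
  exact ⟨hfeas, le_antisymm (le_csInf ⟨_, hmemF⟩ hlbF) (csInf_le ⟨_, hlbF⟩ hmemF)⟩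
end

section
/- Suppose J(u,x) = Σ_{t=0}^{T−1} c_t(x(t),u(t)) + c_T(x(T)) where each c_t : X_t × U → ℝ is bounded on X_t × U, c_T : X_T → ℝ is bounded on X_T, Γ_{x,t} ≠ ∅ for all x ∈ X_t and t ∈ {0,…,T−1}, and F : ℝ^n × {0,…,T} → ℝ satisfies Bellman's Equation (F(x,T) = c_T(x) on X_T and F(x,t) = inf_{u ∈ Γ_{x,t}} { c_t(x,u) + F(f(x,u,t), t+1) } on X_t for t ∈ {0,…,T−1}). Then a pair (u*, x*) solves the MSOP initialized at x_0 (i.e., is feasible and minimizes J over feasible pairs) if and only if x*(0) = x_0, x*(k+1) = f(x*(k),u*(k),k) and u*(k) ∈ arg inf_{u ∈ Γ_{x*(k),k}} { c_k(x*(k),u) + F(f(x*(k),u,k), k+1) } for every k ∈ {0,…,T−1}. -/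
open Set Filter MeasureTheory

section BellmanAux

variable {n m : ℕ} {T : ℕ}
  {X : ℕ → Set (Fin n → ℝ)} {U : Set (Fin m → ℝ)}
  {f : (Fin n → ℝ) → (Fin m → ℝ) → ℕ → (Fin n → ℝ)}
  {c : ℕ → (Fin n → ℝ) → (Fin m → ℝ) → ℝ} {cT : (Fin n → ℝ) → ℝ}
  {F : (Fin n → ℝ) → ℕ → ℝ}

/-- `F` is bounded below on `X t`. -/
lemma bellman_lb
    (hc : ∀ t, t < T → ∃ R, ∀ a ∈ X t, ∀ b ∈ U, |c t a b| ≤ R)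
    (hcT : ∃ R, ∀ a ∈ X T, |cT a| ≤ R)
    (hGam : ∀ t, t < T → ∀ a ∈ X t, ∃ b ∈ U, f a b t ∈ X (t + 1))
    (hFT : ∀ a ∈ X T, F a T = cT a)
    (hF : ∀ t, t < T → ∀ a ∈ X t, F a t =
      sInf {y : ℝ | ∃ b ∈ U, f a b t ∈ X (t + 1) ∧
        y = c t a b + F (f a b t) (t + 1)}) :
    ∀ k t, t + k = T → ∃ B : ℝ, ∀ a ∈ X t, B ≤ F a t := by
  intro k
  induction k with
  | zero =>
    intro t ht
    have hteq : t = T := by omega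
    subst hteq
    obtain ⟨R, hR⟩ := hcT
    exact ⟨-R, fun a ha => by rw [hFT a ha]; linarith [(abs_le.mp (hR a ha)).1]⟩
  | succ k ih =>
    intro t ht
    have htT : t < T := by omega
    obtain ⟨B, hB⟩ := ih (t + 1) (by omega)
    obtain ⟨R, hR⟩ := hc t htT
    refine ⟨-R + B, fun a ha => ?_⟩
    rw [hF t htT a ha]
    apply le_csInf
    · obtain ⟨b, hb, hfb⟩ := hGam t htT a ha
      exact ⟨_, b, hb, hfb, rfl⟩
    · rintro y ⟨b, hb, hfb, rfl⟩
      have h1 := (abs_le.mp (hR a ha b hb)).1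
      have h2 := hB _ hfb
      linarith

/-- The Bellman infimand set is bounded below. -/
lemma bellman_bdd
    (hc : ∀ t, t < T → ∃ R, ∀ a ∈ X t, ∀ b ∈ U, |c t a b| ≤ R)
    (hcT : ∃ R, ∀ a ∈ X T, |cT a| ≤ R)
    (hGam : ∀ t, t < T → ∀ a ∈ X t, ∃ b ∈ U, f a b t ∈ X (t + 1))
    (hFT : ∀ a ∈ X T, F a T = cT a)
    (hF : ∀ t, t < T → ∀ a ∈ X t, F a t =
      sInf {y : ℝ | ∃ b ∈ U, f a b t ∈ X (t + 1) ∧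
        y = c t a b + F (f a b t) (t + 1)}) :
    ∀ t, t < T → ∀ a, a ∈ X t →
      BddBelow {y : ℝ | ∃ b ∈ U, f a b t ∈ X (t + 1) ∧
        y = c t a b + F (f a b t) (t + 1)} := by
  intro t htT a ha
  obtain ⟨B, hB⟩ := bellman_lb hc hcT hGam hFT hF (T - (t + 1)) (t + 1) (by omega)
  obtain ⟨R, hR⟩ := hc t htT
  refine ⟨-R + B, ?_⟩
  rintro y ⟨b, hb, hfb, rfl⟩
  have h1 := (abs_le.mp (hR a ha b hb)).1
  have h2 := hB _ hfb
  linarith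

/-- `F (x t) t` is a lower bound on the cost-to-go of any feasible tail. -/
lemma bellman_le_cost
    (hc : ∀ t, t < T → ∃ R, ∀ a ∈ X t, ∀ b ∈ U, |c t a b| ≤ R)
    (hcT : ∃ R, ∀ a ∈ X T, |cT a| ≤ R)
    (hGam : ∀ t, t < T → ∀ a ∈ X t, ∃ b ∈ U, f a b t ∈ X (t + 1))
    (hFT : ∀ a ∈ X T, F a T = cT a)
    (hF : ∀ t, t < T → ∀ a ∈ X t, F a t =
      sInf {y : ℝ | ∃ b ∈ U, f a b t ∈ X (t + 1) ∧
        y = c t a b + F (f a b t) (t + 1)}) :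
    ∀ k t, t + k = T → ∀ (u : ℕ → Fin m → ℝ) (x : ℕ → Fin n → ℝ),
      (∀ s, t ≤ s → s ≤ T → x s ∈ X s) →
      (∀ s, t ≤ s → s < T → u s ∈ U ∧ x (s + 1) = f (x s) (u s) s) →
      F (x t) t ≤ (∑ s ∈ Finset.Ico t T, c s (x s) (u s)) + cT (x T) := by
  intro k
  induction k with
  | zero =>
    intro t ht u x hX hU
    have hteq : t = T := by omega
    subst hteq
    rw [Finset.Ico_self, Finset.sum_empty, hFT _ (hX t le_rfl le_rfl)]
    linarith
  | succ k ih =>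
    intro t ht u x hX hU
    have htT : t < T := by omega
    obtain ⟨hu, hx1⟩ := hU t le_rfl htT
    have hxt1 : x (t + 1) ∈ X (t + 1) := hX (t + 1) (by omega) (by omega)
    have step : F (x t) t ≤ c t (x t) (u t) + F (x (t + 1)) (t + 1) := by
      rw [hF t htT (x t) (hX t le_rfl htT.le)]
      exact csInf_le (bellman_bdd hc hcT hGam hFT hF t htT (x t) (hX t le_rfl htT.le))
        ⟨u t, hu, by rw [← hx1]; exact hxt1, by rw [hx1]⟩
    have ihh := ih (t + 1) (by omega) u x (fun s hs hsT => hX s (by omega) hsT)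
      (fun s hs hsT => hU s (by omega) hsT)
    rw [Finset.sum_eq_sum_Ico_succ_bot htT]
    linarith

/-- From any state there is a feasible tail whose cost is within `ε` of `F`. -/
lemma bellman_approx
    (hc : ∀ t, t < T → ∃ R, ∀ a ∈ X t, ∀ b ∈ U, |c t a b| ≤ R)
    (hcT : ∃ R, ∀ a ∈ X T, |cT a| ≤ R)
    (hGam : ∀ t, t < T → ∀ a ∈ X t, ∃ b ∈ U, f a b t ∈ X (t + 1))
    (hFT : ∀ a ∈ X T, F a T = cT a)
    (hF : ∀ t, t < T → ∀ a ∈ X t, F a t =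
      sInf {y : ℝ | ∃ b ∈ U, f a b t ∈ X (t + 1) ∧
        y = c t a b + F (f a b t) (t + 1)}) :
    ∀ k t, t + k = T → ∀ a ∈ X t, ∀ ε : ℝ, 0 < ε →
      ∃ (u : ℕ → Fin m → ℝ) (x : ℕ → Fin n → ℝ), x t = a ∧
        (∀ s, t ≤ s → s ≤ T → x s ∈ X s) ∧
        (∀ s, t ≤ s → s < T → u s ∈ U ∧ x (s + 1) = f (x s) (u s) s) ∧
        (∑ s ∈ Finset.Ico t T, c s (x s) (u s)) + cT (x T) ≤ F a t + ε := by
  intro k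
  induction k with
  | zero =>
    intro t ht a ha ε hε
    have hteq : t = T := by omega
    subst hteq
    refine ⟨fun _ => 0, fun _ => a, rfl, ?_, ?_, ?_⟩
    · intro s hs hsT
      have hst : s = t := by omega
      subst hst; exact ha
    · intro s hs hsT; omega
    · rw [Finset.Ico_self, Finset.sum_empty, hFT a ha]; linarith
  | succ k ih =>
    intro t ht a ha ε hε
    have htT : t < T := by omega
    obtain ⟨b0, hb0, hfb0⟩ := hGam t htT a ha
    have hne : ({y : ℝ | ∃ b ∈ U, f a b t ∈ X (t + 1) ∧
        y = c t a b + F (f a b t) (t + 1)}).Nonempty := ⟨_, b0, hb0, hfb0, rfl⟩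
    have hlt : sInf {y : ℝ | ∃ b ∈ U, f a b t ∈ X (t + 1) ∧
        y = c t a b + F (f a b t) (t + 1)} < F a t + ε / 2 := by
      rw [hF t htT a ha]; linarith
    obtain ⟨y, hy, hylt⟩ := exists_lt_of_csInf_lt hne hlt
    obtain ⟨b, hb, hfb, rfl⟩ := hy
    obtain ⟨u', x', hx't, hX', hU', hcost'⟩ :=
      ih (t + 1) (by omega) (f a b t) hfb (ε / 2) (by positivity)
    have hxs : ∀ s, s ≠ t → Function.update x' t a s = x' s :=
      fun s hs => Function.update_of_ne hs _ _
    have hus : ∀ s, s ≠ t → Function.update u' t b s = u' s :=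
      fun s hs => Function.update_of_ne hs _ _
    refine ⟨Function.update u' t b, Function.update x' t a,
      Function.update_self _ _ _, ?_, ?_, ?_⟩
    · intro s hs hsT
      rcases eq_or_lt_of_le hs with h | h
      · subst h; rw [Function.update_self]; exact ha
      · rw [hxs s (by omega)]; exact hX' s (by omega) hsT
    · intro s hs hsT
      rcases eq_or_lt_of_le hs with h | h
      · subst h
        refine ⟨by rw [Function.update_self]; exact hb, ?_⟩
        rw [hxs (t + 1) (by omega), hx't, Function.update_self, Function.update_self]
      · obtain ⟨h1, h2⟩ := hU' s (by omega) hsT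
        refine ⟨by rw [hus s (by omega)]; exact h1, ?_⟩
        rw [hxs (s + 1) (by omega), hxs s (by omega), hus s (by omega)]
        exact h2
    · have hsum : ∑ s ∈ Finset.Ico (t + 1) T,
          c s (Function.update x' t a s) (Function.update u' t b s)
          = ∑ s ∈ Finset.Ico (t + 1) T, c s (x' s) (u' s) := by
        refine Finset.sum_congr rfl fun s hs => ?_
        have hst : s ≠ t := by
          have := (Finset.mem_Ico.mp hs).1; omega
        rw [hxs s hst, hus s hst]
      rw [Finset.sum_eq_sum_Ico_succ_bot htT, hsum, hxs T (by omega),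
        Function.update_self, Function.update_self]
      linarith

end BellmanAux
/-- (Bellman's Equation, optimality part.) For an additively
separable cost with bounded stage costs, nonempty feasible input sets, and `F`
satisfying Bellman's Equation, a pair `(u*, x*)` solves the MSOP initialized at
`x0` (is feasible and minimizes `J` over feasible pairs) if and only if it
starts at `x0`, follows the dynamics, and `u*(k)` minimizes
`u ↦ c_k(x*(k),u) + F(f(x*(k),u,k), k+1)` over `Γ_{x*(k),k}` for every `k < T`. -/
theorem bellman_equation_necessary_and_sufficient
    {n m : ℕ} (T : ℕ) (hT : 1 ≤ T)
    (X : ℕ → Set (Fin n → ℝ)) (U : Set (Fin m → ℝ))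
    (f : (Fin n → ℝ) → (Fin m → ℝ) → ℕ → (Fin n → ℝ))
    (x0 : Fin n → ℝ) (hx0 : x0 ∈ X 0)
    (c : ℕ → (Fin n → ℝ) → (Fin m → ℝ) → ℝ) (cT : (Fin n → ℝ) → ℝ)
    (J : (ℕ → Fin m → ℝ) → (ℕ → Fin n → ℝ) → ℝ)
    (hJ : ∀ u x, J u x = (∑ t ∈ Finset.range T, c t (x t) (u t)) + cT (x T))
    (hc : ∀ t, t < T → ∃ R, ∀ a ∈ X t, ∀ b ∈ U, |c t a b| ≤ R)
    (hcT : ∃ R, ∀ a ∈ X T, |cT a| ≤ R)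
    (hGam : ∀ t, t < T → ∀ a ∈ X t, ∃ b ∈ U, f a b t ∈ X (t + 1))
    (F : (Fin n → ℝ) → ℕ → ℝ)
    (hFT : ∀ a ∈ X T, F a T = cT a)
    (hF : ∀ t, t < T → ∀ a ∈ X t, F a t =
      sInf {y : ℝ | ∃ b ∈ U, f a b t ∈ X (t + 1) ∧
        y = c t a b + F (f a b t) (t + 1)})
    (ustar : ℕ → Fin m → ℝ) (xstar : ℕ → Fin n → ℝ) :
    (Feas T f X U x0 ustar xstar ∧
        ∀ u x, Feas T f X U x0 u x → J ustar xstar ≤ J u x) ↔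
      (xstar 0 = x0 ∧
        (∀ k, k < T → xstar (k + 1) = f (xstar k) (ustar k) k) ∧
        ∀ k, k < T →
          (ustar k ∈ U ∧ f (xstar k) (ustar k) k ∈ X (k + 1)) ∧
          ∀ b ∈ U, f (xstar k) b k ∈ X (k + 1) →
            c k (xstar k) (ustar k) + F (f (xstar k) (ustar k) k) (k + 1) ≤
              c k (xstar k) b + F (f (xstar k) b k) (k + 1)) := by
  constructor
  · -- optimality implies Bellman pointwise optimality
    rintro ⟨⟨h0, hX, hUd⟩, hopt⟩
    -- J(u*,x*) = F x0 0
    have LB := bellman_le_cost hc hcT hGam hFT hF T 0 (by omega) ustar xstar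
      (fun s _ hsT => hX s hsT) (fun s _ hsT => hUd s hsT)
    rw [h0] at LB
    have hJeq : J ustar xstar = F x0 0 := by
      apply le_antisymm
      · apply le_of_forall_pos_le_add
        intro ε hε
        obtain ⟨u, x, hxt, hXx, hUx, hcost⟩ :=
          bellman_approx hc hcT hGam hFT hF T 0 (by omega) x0 hx0 ε hε
        have hfx : Feas T f X U x0 u x :=
          ⟨hxt, fun t ht => hXx t (Nat.zero_le t) ht, fun t ht => hUx t (Nat.zero_le t) ht⟩
        calc J ustar xstar ≤ J u x := hopt u x hfx
          _ = (∑ s ∈ Finset.Ico 0 T, c s (x s) (u s)) + cT (x T) := by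
              rw [hJ u x, Finset.range_eq_Ico]
          _ ≤ F x0 0 + ε := hcost
      · rw [hJ, Finset.range_eq_Ico]; exact LB
    -- cost-to-go of (u*,x*) equals F at every time
    have hW : ∀ k, k ≤ T →
        (∑ s ∈ Finset.Ico k T, c s (xstar s) (ustar s)) + cT (xstar T)
          = F (xstar k) k := by
      intro k
      induction k with
      | zero =>
        intro _
        rw [hJ ustar xstar, Finset.range_eq_Ico] at hJeq
        rw [hJeq, h0]
      | succ k ihk =>
        intro hk1
        have hk : k < T := by omega
        have ihh := ihk hk.le
        have hsplit := Finset.sum_eq_sum_Ico_succ_bot hk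
          (fun s => c s (xstar s) (ustar s))
        have htail := bellman_le_cost hc hcT hGam hFT hF (T - (k + 1)) (k + 1)
          (by omega) ustar xstar (fun s _ hsT => hX s hsT) (fun s _ hsT => hUd s hsT)
        have hstep : F (xstar k) k ≤ c k (xstar k) (ustar k) + F (xstar (k + 1)) (k + 1) := by
          rw [hF k hk _ (hX k hk.le)]
          refine csInf_le (bellman_bdd hc hcT hGam hFT hF k hk _ (hX k hk.le))
            ⟨ustar k, (hUd k hk).1, ?_, ?_⟩
          · rw [← (hUd k hk).2]; exact hX (k + 1) hk1
          · rw [(hUd k hk).2]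
        linarith
    refine ⟨h0, fun k hk => (hUd k hk).2, fun k hk => ?_⟩
    have hxk1 : f (xstar k) (ustar k) k ∈ X (k + 1) := by
      rw [← (hUd k hk).2]; exact hX (k + 1) hk
    refine ⟨⟨(hUd k hk).1, hxk1⟩, ?_⟩
    intro b hb hfb
    have h1 := hW k hk.le
    have h2 := hW (k + 1) hk
    have hsplit := Finset.sum_eq_sum_Ico_succ_bot hk
      (fun s => c s (xstar s) (ustar s))
    have hkey : F (xstar k) k = c k (xstar k) (ustar k) + F (xstar (k + 1)) (k + 1) := by
      linarith
    have hle : F (xstar k) k ≤ c k (xstar k) b + F (f (xstar k) b k) (k + 1) := by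
      rw [hF k hk _ (hX k hk.le)]
      exact csInf_le (bellman_bdd hc hcT hGam hFT hF k hk _ (hX k hk.le))
        ⟨b, hb, hfb, rfl⟩
    rw [← (hUd k hk).2]
    linarith
  · -- Bellman pointwise optimality implies optimality
    rintro ⟨h0, hdyn, hmin⟩
    have hXs : ∀ t, t ≤ T → xstar t ∈ X t := by
      intro t
      induction t with
      | zero => intro _; rw [h0]; exact hx0
      | succ t iht =>
        intro ht
        rw [hdyn t (by omega)]
        exact (hmin t (by omega)).1.2
    have hfeas : Feas T f X U x0 ustar xstar :=
      ⟨h0, hXs, fun t ht => ⟨(hmin t ht).1.1, hdyn t ht⟩⟩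
    have key : ∀ k, k < T →
        F (xstar k) k = c k (xstar k) (ustar k) + F (xstar (k + 1)) (k + 1) := by
      intro k hk
      have hmem : c k (xstar k) (ustar k) + F (f (xstar k) (ustar k) k) (k + 1) ∈
          {y : ℝ | ∃ b ∈ U, f (xstar k) b k ∈ X (k + 1) ∧
            y = c k (xstar k) b + F (f (xstar k) b k) (k + 1)} :=
        ⟨ustar k, (hmin k hk).1.1, (hmin k hk).1.2, rfl⟩
      have hlb : ∀ y ∈ {y : ℝ | ∃ b ∈ U, f (xstar k) b k ∈ X (k + 1) ∧
            y = c k (xstar k) b + F (f (xstar k) b k) (k + 1)},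
          c k (xstar k) (ustar k) + F (f (xstar k) (ustar k) k) (k + 1) ≤ y := by
        rintro y ⟨b, hb, hfb, rfl⟩
        exact (hmin k hk).2 b hb hfb
      rw [hF k hk _ (hXs k hk.le), hdyn k hk]
      exact le_antisymm (csInf_le ⟨_, hlb⟩ hmem) (le_csInf ⟨_, hmem⟩ hlb)
    have hJstar : J ustar xstar = F x0 0 := by
      rw [hJ]
      have hterms : ∀ kk ∈ Finset.range T, c kk (xstar kk) (ustar kk)
          = F (xstar kk) kk - F (xstar (kk + 1)) (kk + 1) := by
        intro kk hkk
        have := key kk (Finset.mem_range.mp hkk)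
        linarith
      rw [Finset.sum_congr rfl hterms,
        Finset.sum_range_sub' (fun i => F (xstar i) i) T, hFT _ (hXs T le_rfl), h0]
      ring
    refine ⟨hfeas, fun u x hfx => ?_⟩
    have := bellman_le_cost hc hcT hGam hFT hF T 0 (by omega) u x
      (fun s _ hsT => hfx.2.1 s hsT) (fun s _ hsT => hfx.2.2 s hsT)
    rw [hfx.1] at this
    rw [hJstar, hJ u x, Finset.range_eq_Ico]
    exact this
end

section
/- Let I_t ⊆ ℝ^k (t = 0,…,T), c_t : X_t × U × I_t → [0,∞) for t = 0,…,T−1, c_T : X_T × I_T → ℝ, and densities p_t : X_t × U × I_t → [0,∞), p_T : X_T × I_T → [0,∞) with ∫_{I_t} p_t(x,u,w) dw = 1 and ∫_{I_T} p_T(x,w) dw = 1 for all (x,u). Define J(u,x) = ∫_{I_0 × ⋯ × I_T} c_T(x(T),w(T)) Π_{t=0}^{T−1} c_t(x(t),u(t),w(t)) · p_T(x(T),w(T)) Π_{t=0}^{T−1} p_t(x(t),u(t),w(t)) dw(0)⋯dw(T). Then J is monotonically backward separable, realized by the representation maps φ_T(x) = ∫_{I_T} c_T(x,w) p_T(x,w)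 dw and φ_i(x,u,z) = z · ∫_{I_i} p_i(x,u,w) c_i(x,u,w) dw for i = 0,…,T−1. If moreover all c_t and p_t are bounded and each I_t has finite Lebesgue measure, then J is naturally monotonically backward separable; and if ∫_{I_i} p_i(x,u,w) c_i(x,u,w) dw ≠ 0 for all (x,u) ∈ X_i × U and all i ∈ {0,…,T−1}, the representation maps are strictly monotonic in their third argument. -/
open Set Filter MeasureTheory

lemma aux_map_restrict_equiv {α β : Type*} [MeasurableSpace α] [MeasurableSpace β]
    (e : α ≃ᵐ β) (μ : Measure α) (S : Set β) :
    Measure.map e (μ.restrict (e ⁻¹' S)) = (Measure.map e μ).restrict S := by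
  ext A hA
  rw [MeasurableEquiv.map_apply, Measure.restrict_apply (e.measurable hA),
    Measure.restrict_apply hA, MeasurableEquiv.map_apply, Set.preimage_inter]

lemma aux_restrict_pi_pi {E : Type*} [MeasurableSpace E] (μ : Measure E) [SigmaFinite μ] :
    ∀ (N : ℕ) (s : Fin N → Set E),
      Measure.pi (fun i => μ.restrict (s i))
        = (Measure.pi (fun _ : Fin N => μ)).restrict (Set.pi Set.univ s)
  | 0, s => by
    have h : Set.pi Set.univ s = Set.univ := Set.eq_univ_of_forall (fun f i _ => i.elim0)
    rw [h, Measure.restrict_univ]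
    congr 1
    funext i
    exact i.elim0
  | (N + 1), s => by
    have IH := aux_restrict_pi_pi μ N (fun i => s i.succ)
    set e := MeasurableEquiv.piFinSuccAbove (fun _ : Fin (N + 1) => E) 0 with he
    have h1 := (measurePreserving_piFinSuccAbove
      (fun i : Fin (N + 1) => μ.restrict (s i)) 0).map_eq
    have h2 := (measurePreserving_piFinSuccAbove (fun _ : Fin (N + 1) => μ) 0).map_eq
    simp only [Fin.zero_succAbove] at h1 h2
    have hpre : e ⁻¹' ((s 0) ×ˢ (Set.pi Set.univ fun j : Fin N => s j.succ))
        = Set.pi Set.univ s := by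
      ext w
      simp only [Set.mem_preimage, he, MeasurableEquiv.piFinSuccAbove_apply,
        Set.mem_prod, Set.mem_pi, Set.mem_univ, forall_true_left, Fin.zero_succAbove,
        Set.mem_univ_pi]
      constructor
      · rintro ⟨h0, hs⟩ i
        refine Fin.cases h0 hs i
      · intro h
        exact ⟨h 0, fun j => h j.succ⟩
    have key : Measure.map e (Measure.pi fun i => μ.restrict (s i))
        = Measure.map e ((Measure.pi (fun _ : Fin (N+1) => μ)).restrict (Set.pi Set.univ s)) := by
      rw [h1, IH, Measure.prod_restrict, ← h2, ← hpre, aux_map_restrict_equiv]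
    have := congrArg (Measure.map e.symm) key
    rwa [Measure.map_map e.symm.measurable e.measurable,
      Measure.map_map e.symm.measurable e.measurable, e.symm_comp_self,
      Measure.map_id, Measure.map_id] at this


lemma aux_integral_pi_prod {E : Type*} [MeasurableSpace E] :
    ∀ (N : ℕ) (ν : Fin N → Measure E) (_ : ∀ i, SigmaFinite (ν i)) (f : Fin N → E → ℝ),
      ∫ x, ∏ i, f i (x i) ∂(Measure.pi ν) = ∏ i, ∫ x, f i x ∂(ν i)
  | 0, ν, hν, f => by
    simp only [Finset.univ_eq_empty, Finset.prod_empty, integral_const, smul_eq_mul, mul_one]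
    simp only [Measure.real, Measure.pi_univ]
    simp
  | (N + 1), ν, hν, f => by
    have : ∀ i, SigmaFinite (ν i) := hν
    calc ∫ x, ∏ i, f i (x i) ∂(Measure.pi ν)
        = ∫ q : E × (Fin N → E), f 0 q.1 * ∏ i : Fin N, f i.succ (q.2 i)
            ∂((ν 0).prod (Measure.pi fun i => ν i.succ)) := by
          have h := (measurePreserving_piFinSuccAbove ν 0).symm
          simp only [Fin.zero_succAbove] at h
          rw [← h.integral_comp']
          simp_rw [MeasurableEquiv.piFinSuccAbove_symm_apply, Fin.insertNthEquiv,
            Fin.prod_univ_succ, Fin.insertNth_zero, Equiv.coe_fn_mk, Fin.cons_succ,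
            Fin.cons_zero, cast_eq]
      _ = (∫ x, f 0 x ∂(ν 0)) * ∏ i : Fin N, ∫ x, f i.succ x ∂(ν i.succ) := by
          rw [← aux_integral_pi_prod N (fun i => ν i.succ) (fun i => hν i.succ)
            (fun i => f i.succ), ← integral_prod_mul]
      _ = ∏ i, ∫ x, f i x ∂(ν i) := (Fin.prod_univ_succ (fun i => ∫ x, f i x ∂(ν i))).symm

lemma aux_setIntegral_nonneg {E : Type*} [MeasurableSpace E] {μ : Measure E} {s : Set E}
    {f : E → ℝ} (h : ∀ x ∈ s, 0 ≤ f x) : 0 ≤ ∫ x in s, f x ∂μ := by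
  by_cases hm : AEStronglyMeasurable f (μ.restrict s)
  · refine integral_nonneg_of_ae ?_
    have hfg := hm.ae_eq_mk
    have hg : StronglyMeasurable (hm.mk f) := hm.stronglyMeasurable_mk
    have hA : MeasurableSet {x | hm.mk f x < 0} := hg.measurable measurableSet_Iio
    have hnullset : μ.restrict s {x | ¬ f x = hm.mk f x} = 0 := ae_iff.1 hfg
    have hnull : μ.restrict s {x | hm.mk f x < 0} = 0 := by
      have hsub : {x | hm.mk f x < 0} ∩ s
          ⊆ toMeasurable (μ.restrict s) {x | ¬ f x = hm.mk f x} ∩ s := by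
        rintro x ⟨hx1, hx2⟩
        refine ⟨subset_toMeasurable _ _ ?_, hx2⟩
        intro hfx
        exact absurd (hfx ▸ h x hx2) (not_le.2 hx1)
      refine le_antisymm ?_ zero_le
      calc μ.restrict s {x | hm.mk f x < 0} = μ ({x | hm.mk f x < 0} ∩ s) :=
            Measure.restrict_apply hA
        _ ≤ μ (toMeasurable (μ.restrict s) {x | ¬ f x = hm.mk f x} ∩ s) := measure_mono hsub
        _ = μ.restrict s (toMeasurable (μ.restrict s) {x | ¬ f x = hm.mk f x}) :=
            (Measure.restrict_apply (measurableSet_toMeasurable _ _)).symm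
        _ = μ.restrict s {x | ¬ f x = hm.mk f x} := measure_toMeasurable _
        _ = 0 := hnullset
    have hgpos : ∀ᵐ x ∂(μ.restrict s), 0 ≤ hm.mk f x := by
      rw [ae_iff]
      simpa [not_le] using hnull
    filter_upwards [hgpos, hfg] with x h1 h2
    rw [h2]; exact h1
  · rw [integral_non_aestronglyMeasurable hm]

lemma aux_abs_setIntegral_le {E : Type*} [MeasurableSpace E] {μ : Measure E} {s : Set E}
    {f : E → ℝ} {B : ℝ} (hB : 0 ≤ B) (h : ∀ x ∈ s, |f x| ≤ B) (hs : μ s < ⊤) :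
    |∫ x in s, f x ∂μ| ≤ B * (μ s).toReal := by
  by_cases hm : AEStronglyMeasurable f (μ.restrict s)
  · simpa [Real.norm_eq_abs, Measure.real] using
      norm_setIntegral_le_of_norm_le_const (f := f) hs (fun x hx => by simpa using h x hx)
  · rw [integral_non_aestronglyMeasurable hm]
    simp only [abs_zero]
    positivity

lemma aux_nest {α β : Type*} (φT : α → ℝ) (C : ℕ → α → β → ℝ) (u : ℕ → β) (x : ℕ → α) :
    ∀ (k t : ℕ), nest (fun i a b z => z * C i a b) φT u x t k
      = φT (x (t + k)) * ∏ j ∈ Finset.range k, C (t + j) (x (t + j)) (u (t + j))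
  | 0, t => by simp [nest]
  | (k + 1), t => by
    rw [show nest (fun i a b z => z * C i a b) φT u x t (k+1)
      = (nest (fun i a b z => z * C i a b) φT u x (t+1) k) * C t (x t) (u t) from rfl,
      aux_nest φT C u x k (t + 1), Finset.prod_range_succ']
    simp only [Nat.add_zero]
    rw [show t + (k + 1) = t + 1 + k by omega]
    have hprod : ∏ j ∈ Finset.range k, C (t + (j + 1)) (x (t + (j + 1))) (u (t + (j + 1)))
        = ∏ j ∈ Finset.range k, C (t + 1 + j) (x (t + 1 + j)) (u (t + 1 + j)) :=
      Finset.prod_congr rfl (fun j _ => by rw [show t + (j + 1) = t + 1 + j by omega])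
    rw [hprod]
    ring

/-- The multiplicative (expected product) cost
`J(u,x) = ∫_{I_0 × ⋯ × I_T} c_T(x T, w T) Π_{t<T} c_t(x t, u t, w t) ·
p_T(x T, w T) Π_{t<T} p_t(x t, u t, w t) dw` (with nonnegative `c_t`, and
densities `p_t` integrating to one) is monotonically backward separable,
realized by `φ_T(x) = ∫_{I_T} c_T(x,w) p_T(x,w) dw` and
`φ_i(x,u,z) = z ∫_{I_i} p_i(x,u,w) c_i(x,u,w) dw`. If moreover all `c_t, p_t`
are bounded and each `I_t` has finite measure, `J` is naturally monotonically
backward separable; and if `∫_{I_i} p_i c_i dw ≠ 0` on `X_i × U` the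
representation maps are strictly monotonic. -/
theorem multiplicative_is_backward_separable
    {n m k : ℕ} (T : ℕ) (hT : 1 ≤ T)
    (X : ℕ → Set (Fin n → ℝ)) (U : Set (Fin m → ℝ))
    (I : ℕ → Set (Fin k → ℝ))
    (c : ℕ → (Fin n → ℝ) → (Fin m → ℝ) → (Fin k → ℝ) → ℝ)
    (cT : (Fin n → ℝ) → (Fin k → ℝ) → ℝ)
    (p : ℕ → (Fin n → ℝ) → (Fin m → ℝ) → (Fin k → ℝ) → ℝ)
    (pT : (Fin n → ℝ) → (Fin k → ℝ) → ℝ)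
    (hc : ∀ t, t < T → ∀ a ∈ X t, ∀ b ∈ U, ∀ w ∈ I t, 0 ≤ c t a b w)
    (hp : ∀ t, t < T → ∀ a ∈ X t, ∀ b ∈ U, ∀ w ∈ I t, 0 ≤ p t a b w)
    (hpT : ∀ a ∈ X T, ∀ w ∈ I T, 0 ≤ pT a w)
    (hp1 : ∀ t, t < T → ∀ a ∈ X t, ∀ b ∈ U, (∫ w in I t, p t a b w) = 1)
    (hpT1 : ∀ a ∈ X T, (∫ w in I T, pT a w) = 1)
    (J : (ℕ → Fin m → ℝ) → (ℕ → Fin n → ℝ) → ℝ)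
    (hJ : ∀ u x, J u x =
      ∫ w in Set.univ.pi (fun t : Fin (T + 1) => I (t : ℕ)),
        (cT (x T) (w (Fin.last T)) * ∏ t ∈ Finset.range T, c t (x t) (u t) (w (Fin.ofNat (T + 1) t))) *
          (pT (x T) (w (Fin.last T)) * ∏ t ∈ Finset.range T, p t (x t) (u t) (w (Fin.ofNat (T + 1) t)))) :
    (IsRep T X U J
        (fun i a b z => z * ∫ w in I i, p i a b w * c i a b w)
        (fun a => ∫ w in I T, cT a w * pT a w) ∧
      MonoRep T X U
        (fun i a b z => z * ∫ w in I i, p i a b w * c i a b w)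
        (fun a => ∫ w in I T, cT a w * pT a w)) ∧
    ((∀ t, t < T → ∃ R, ∀ a ∈ X t, ∀ b ∈ U, ∀ w ∈ I t, |c t a b w| ≤ R) →
      (∃ R, ∀ a ∈ X T, ∀ w ∈ I T, |cT a w| ≤ R) →
      (∀ t, t < T → ∃ R, ∀ a ∈ X t, ∀ b ∈ U, ∀ w ∈ I t, |p t a b w| ≤ R) →
      (∃ R, ∀ a ∈ X T, ∀ w ∈ I T, |pT a w| ≤ R) →
      (∀ t, t ≤ T → volume (I t) < ⊤) →
        USCRep T X U
          (fun i a b z => z * ∫ w in I i, p i a b w * c i a b w)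
          (fun a => ∫ w in I T, cT a w * pT a w) ∧
        BddRep T X U
          (fun i a b z => z * ∫ w in I i, p i a b w * c i a b w)
          (fun a => ∫ w in I T, cT a w * pT a w)) ∧
    ((∀ i, i < T → ∀ a ∈ X i, ∀ b ∈ U, (∫ w in I i, p i a b w * c i a b w) ≠ 0) →
      StrictMonoRep T X U
        (fun i a b z => z * ∫ w in I i, p i a b w * c i a b w)
        (fun a => ∫ w in I T, cT a w * pT a w)) := by
  classical
  set Phi : ℕ → (Fin n → ℝ) → (Fin m → ℝ) → ℝ → ℝ :=
    fun i a b z => z * ∫ w in I i, p i a b w * c i a b w with hPhi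
  set PhiT : (Fin n → ℝ) → ℝ := fun a => ∫ w in I T, cT a w * pT a w with hPhiT
  refine ⟨⟨?_, ?_⟩, ?_, ?_⟩
  · -- IsRep
    intro u x hu hx
    set F : Fin (T + 1) → (Fin k → ℝ) → ℝ := fun i v =>
      if (i : ℕ) < T then p i (x i) (u i) v * c i (x i) (u i) v
      else cT (x T) v * pT (x T) v with hF
    have hcoe : ∀ i : Fin T, Fin.ofNat (T + 1) (i : ℕ) = i.castSucc := by
      intro i
      apply Fin.ext
      rw [Fin.val_ofNat, Nat.mod_eq_of_lt (by omega), Fin.coe_castSucc]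
    have hlastF : ∀ v, F (Fin.last T) v = cT (x T) v * pT (x T) v := by
      intro v; simp [hF]
    have hcastF : ∀ (i : Fin T) v, F i.castSucc v
        = p i (x i) (u i) v * c i (x i) (u i) v := by
      intro i v; simp [hF, i.is_lt]
    have hint : ∀ w : Fin (T + 1) → Fin k → ℝ,
        (cT (x T) (w (Fin.last T)) * ∏ t ∈ Finset.range T, c t (x t) (u t) (w (Fin.ofNat (T + 1) t))) *
          (pT (x T) (w (Fin.last T)) * ∏ t ∈ Finset.range T, p t (x t) (u t) (w (Fin.ofNat (T + 1) t)))
        = ∏ i : Fin (T + 1), F i (w i) := by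
      intro w
      rw [Fin.prod_univ_castSucc, hlastF]
      have h2 : ∏ i : Fin T, F i.castSucc (w i.castSucc)
          = (∏ i : Fin T, p i (x i) (u i) (w i.castSucc)) *
            ∏ i : Fin T, c i (x i) (u i) (w i.castSucc) := by
        rw [← Finset.prod_mul_distrib]
        exact Finset.prod_congr rfl fun i _ => hcastF i (w i.castSucc)
      have h3 : ∀ (g : ℕ → (Fin k → ℝ) → ℝ),
          ∏ t ∈ Finset.range T, g t (w (Fin.ofNat (T + 1) t)) = ∏ i : Fin T, g i (w i.castSucc) := by
        intro g
        rw [Finset.prod_range]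
        exact Finset.prod_congr rfl fun i _ => by rw [hcoe i]
      rw [h2, h3 (fun t v => c t (x t) (u t) v), h3 (fun t v => p t (x t) (u t) v)]
      ring
    calc J u x
        = ∫ w in Set.univ.pi (fun t : Fin (T + 1) => I (t : ℕ)),
            ∏ i : Fin (T + 1), F i (w i) := by
          rw [hJ]
          exact integral_congr_ae (Filter.Eventually.of_forall fun w => hint w)
      _ = ∫ w, ∏ i : Fin (T + 1), F i (w i)
            ∂(Measure.pi fun i : Fin (T + 1) => volume.restrict (I (i : ℕ))) := by
          rw [aux_restrict_pi_pi volume (T + 1) (fun i : Fin (T + 1) => I (i : ℕ))]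
          rw [show (volume : Measure (Fin (T + 1) → Fin k → ℝ))
            = Measure.pi (fun _ => volume) from rfl]
      _ = ∏ i : Fin (T + 1), ∫ v, F i v ∂(volume.restrict (I (i : ℕ))) :=
          aux_integral_pi_prod (T + 1) _ (fun _ => inferInstance) F
      _ = nest Phi PhiT u x 0 T := by
          rw [aux_nest PhiT (fun i a b => ∫ w in I i, p i a b w * c i a b w) u x T 0]
          rw [Fin.prod_univ_castSucc]
          have hl : (∫ v, F (Fin.last T) v ∂(volume.restrict (I ((Fin.last T : Fin (T+1)) : ℕ))))
              = PhiT (x T) := by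
            simp only [Fin.val_last, hPhiT]
            exact integral_congr_ae (Filter.Eventually.of_forall fun v => hlastF v)
          have hcs : ∀ i : Fin T,
              (∫ v, F i.castSucc v ∂(volume.restrict (I ((i.castSucc : Fin (T+1)) : ℕ))))
              = ∫ w in I (i : ℕ), p i (x i) (u i) w * c i (x i) (u i) w := by
            intro i
            simp only [Fin.coe_castSucc]
            exact integral_congr_ae (Filter.Eventually.of_forall fun v => hcastF i v)
          rw [Finset.prod_congr rfl fun (i : Fin T) _ => hcs i, hl]
          rw [← Finset.prod_range (fun t => ∫ w in I t, p t (x t) (u t) w * c t (x t) (u t) w)]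
          simp only [Nat.zero_add]
          ring
  · -- MonoRep
    intro t ht a ha b hb z _ w _ hwz
    have hC : 0 ≤ ∫ y in I t, p t a b y * c t a b y :=
      aux_setIntegral_nonneg fun y hy =>
        mul_nonneg (hp t ht a ha b hb y hy) (hc t ht a ha b hb y hy)
    exact mul_le_mul_of_nonneg_right hwz hC
  · -- natural part
    intro hbc hbcT hbp hbpT hvol
    constructor
    · -- USC
      intro t ht a ha b hb z _ _ L hL
      exact hL.mul_const _
    · -- Bdd
      have key : ∀ (j t : ℕ), t + j = T → ∃ R, 0 < R ∧
          ∀ z ∈ imSet Phi PhiT X U t j, |z| < R := by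
        intro j
        induction j with
        | zero =>
          intro t htT
          obtain ⟨RcT, hRcT⟩ := hbcT
          obtain ⟨RpT, hRpT⟩ := hbpT
          have htT' : t = T := by omega
          subst htT'
          refine ⟨max (RcT * RpT) 0 * (volume (I t)).toReal + 1, by positivity, ?_⟩
          rintro z ⟨a, ha, rfl⟩
          have hbnd : |PhiT a| ≤ max (RcT * RpT) 0 * (volume (I t)).toReal := by
            refine aux_abs_setIntegral_le (le_max_right _ _) (fun y hy => ?_) (hvol t le_rfl)
            calc |cT a y * pT a y| = |cT a y| * |pT a y| := abs_mul _ _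
              _ ≤ RcT * RpT := mul_le_mul (hRcT a ha y hy) (hRpT a ha y hy)
                  (abs_nonneg _) ((abs_nonneg _).trans (hRcT a ha y hy))
              _ ≤ max (RcT * RpT) 0 := le_max_left _ _
          calc |PhiT a| ≤ max (RcT * RpT) 0 * (volume (I t)).toReal := hbnd
            _ < max (RcT * RpT) 0 * (volume (I t)).toReal + 1 := lt_add_one _
        | succ j IH =>
          intro t htT
          obtain ⟨R, hR0, hR⟩ := IH (t + 1) (by omega)
          obtain ⟨Rc, hRc⟩ := hbc t (by omega)
          obtain ⟨Rp, hRp⟩ := hbp t (by omega)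
          refine ⟨R * (max (Rp * Rc) 0 * (volume (I t)).toReal + 1), by positivity, ?_⟩
          rintro z ⟨a, ha, b, hb, w, hw, rfl⟩
          have hC : |∫ y in I t, p t a b y * c t a b y|
              ≤ max (Rp * Rc) 0 * (volume (I t)).toReal := by
            refine aux_abs_setIntegral_le (le_max_right _ _) (fun y hy => ?_)
              (hvol t (by omega))
            calc |p t a b y * c t a b y| = |p t a b y| * |c t a b y| := abs_mul _ _
              _ ≤ Rp * Rc := mul_le_mul (hRp a ha b hb y hy) (hRc a ha b hb y hy)
                  (abs_nonneg _) ((abs_nonneg _).trans (hRp a ha b hb y hy))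
              _ ≤ max (Rp * Rc) 0 := le_max_left _ _
          calc |Phi t a b w| = |w| * |∫ y in I t, p t a b y * c t a b y| := abs_mul _ _
            _ ≤ R * (max (Rp * Rc) 0 * (volume (I t)).toReal) :=
                mul_le_mul (hR w hw).le hC (abs_nonneg _) hR0.le
            _ < R * (max (Rp * Rc) 0 * (volume (I t)).toReal + 1) := by
                have := mul_lt_mul_of_pos_left
                  (lt_add_one (max (Rp * Rc) 0 * (volume (I t)).toReal)) hR0
                linarith
      intro t ht
      exact key (T - t) t (by omega)
  · -- strict monotonicity
    intro hne t ht a ha b hb z _ w _ hwz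
    have hC : 0 ≤ ∫ y in I t, p t a b y * c t a b y :=
      aux_setIntegral_nonneg fun y hy =>
        mul_nonneg (hp t ht a ha b hb y hy) (hc t ht a ha b hb y hy)
    have hCpos : 0 < ∫ y in I t, p t a b y * c t a b y :=
      lt_of_le_of_ne hC (Ne.symm (hne t ht a ha b hb))
    exact mul_lt_mul_of_pos_right hwz hCpos
end

section
/- Let p_k : X_k × U → [0,1] (k = 0,…,T−1) and p_T : X_T → [0,1] satisfy, for all (u,x), Σ_{t=0}^{T−1} p_t(x(t),u(t)) Π_{i=0}^{t−1}(1−p_i(x(i),u(i))) + p_T(x(T)) Π_{i=0}^{T−1}(1−p_i(x(i),u(i))) = 1, and let c_k : X_k × U → ℝ, c_T : X_T → ℝ. Define the stochastically stopped additive cost J(u,x) = Σ_{t=0}^{T−1} ( Σ_{s=0}^{t} c_s(x(s),u(s)) ) p_t(x(t),u(t)) Π_{i=0}^{t−1}(1−p_i(x(i),u(i))) + ( Σ_{t=0}^{T−1} c_t(x(t),u(t)) + c_T(x(T)) ) p_T(x(T)) Π_{i=0}^{T−1}(1−p_i(x(i),u(i))). Then J is monotonically backward separable, realized by the representation maps φ_i(x,u,z)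 = c_i(x,u) + z(1 − p_i(x,u)) for i = 0,…,T−1 and φ_T(x) = c_T(x) p_T(x). If all c_t are bounded, J is naturally monotonically backward separable; and if p_i(x,u) ≠ 1 for all (x,u) ∈ X_i × U and all i ∈ {0,…,T−1}, the representation maps are strictly monotonic in their third argument. -/
open Set Filter MeasureTheory

lemma sum_swap_tri (f : ℕ → ℕ → ℝ) :
    ∀ T : ℕ, ∑ t ∈ Finset.range T, ∑ s ∈ Finset.range (t + 1), f s t
      = ∑ s ∈ Finset.range T, ∑ t ∈ Finset.Ico s T, f s t := by
  intro T
  induction T with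
  | zero => simp
  | succ T ih =>
      rw [Finset.sum_range_succ, ih,
        Finset.sum_range_succ (fun s => ∑ t ∈ Finset.Ico s (T + 1), f s t)]
      have h1 : ∀ s ∈ Finset.range T, ∑ t ∈ Finset.Ico s (T + 1), f s t
          = (∑ t ∈ Finset.Ico s T, f s t) + f s T := fun s hs => by
        rw [Finset.sum_Ico_succ_top (le_of_lt (Finset.mem_range.mp hs))]
      rw [Finset.sum_congr rfl h1, Finset.sum_add_distrib,
        Finset.sum_range_succ (fun s => f s T)]
      have h2 : ∑ t ∈ Finset.Ico T (T + 1), f T t = f T T := by simp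
      rw [h2]; ring

lemma telescope (q : ℕ → ℝ) :
    ∀ s, ∑ t ∈ Finset.range s, q t * ∏ i ∈ Finset.range t, (1 - q i)
      = 1 - ∏ i ∈ Finset.range s, (1 - q i) := by
  intro s
  induction s with
  | zero => simp
  | succ s ih => rw [Finset.sum_range_succ, ih, Finset.prod_range_succ]; ring

lemma nest_formula {α β : Type*}
    (c : ℕ → α → β → ℝ) (cT : α → ℝ) (p : ℕ → α → β → ℝ) (pT : α → ℝ)
    (u : ℕ → β) (x : ℕ → α) :
    ∀ k t, nest (fun i a b z => c i a b + z * (1 - p i a b))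
        (fun a => cT a * pT a) u x t k
      = (∑ j ∈ Finset.range k, c (t + j) (x (t + j)) (u (t + j)) *
          ∏ l ∈ Finset.range j, (1 - p (t + l) (x (t + l)) (u (t + l)))) +
        cT (x (t + k)) * pT (x (t + k)) *
          ∏ l ∈ Finset.range k, (1 - p (t + l) (x (t + l)) (u (t + l))) := by
  intro k
  induction k with
  | zero => intro t; simp [nest]
  | succ k ih =>
      intro t
      have hstep : nest (fun i a b z => c i a b + z * (1 - p i a b))
          (fun a => cT a * pT a) u x t (k + 1)
        = c t (x t) (u t) + (nest (fun i a b z => c i a b + z * (1 - p i a b))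
            (fun a => cT a * pT a) u x (t + 1) k) * (1 - p t (x t) (u t)) := rfl
      rw [hstep, ih (t + 1)]
      rw [Finset.sum_range_succ' (fun j => c (t + j) (x (t + j)) (u (t + j)) *
          ∏ l ∈ Finset.range j, (1 - p (t + l) (x (t + l)) (u (t + l)))) k]
      rw [Finset.prod_range_succ' (fun l => (1 - p (t + l) (x (t + l)) (u (t + l)))) k]
      have hprod : ∀ j, ∏ l ∈ Finset.range (j + 1), (1 - p (t + l) (x (t + l)) (u (t + l)))
          = (∏ l ∈ Finset.range j, (1 - p (t + l + 1) (x (t + l + 1)) (u (t + l + 1)))) *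
            (1 - p t (x t) (u t)) := fun j => by
        rw [Finset.prod_range_succ' (fun l => (1 - p (t + l) (x (t + l)) (u (t + l)))) j]
        simp only [← Nat.add_assoc, Nat.add_zero]
      simp only [← Nat.add_assoc, Nat.add_zero, Finset.prod_range_zero, mul_one,
        Nat.add_comm 1 t, Nat.add_right_comm t 1]
      simp only [hprod]
      have hsum : ∑ j ∈ Finset.range k, c (t + j + 1) (x (t + j + 1)) (u (t + j + 1)) *
            ((∏ l ∈ Finset.range j, (1 - p (t + l + 1) (x (t + l + 1)) (u (t + l + 1)))) *
              (1 - p t (x t) (u t)))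
          = (∑ j ∈ Finset.range k, c (t + j + 1) (x (t + j + 1)) (u (t + j + 1)) *
              ∏ l ∈ Finset.range j, (1 - p (t + l + 1) (x (t + l + 1)) (u (t + l + 1)))) *
            (1 - p t (x t) (u t)) := by
        rw [Finset.sum_mul]; exact Finset.sum_congr rfl fun j _ => by ring
      rw [hsum]; ring

/-- The stochastically stopped additive cost (with per-stage
stopping probabilities `p_t ∈ [0,1]` satisfying the law-of-total-probability
constraint) is monotonically backward separable, realized by the representation
maps `φ_i(x,u,z) = c_i(x,u) + z (1 - p_i(x,u))` and `φ_T(x) = c_T(x) p_T(x)`.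
If all `c_t` are bounded, it is naturally monotonically backward separable;
and if `p_i(x,u) ≠ 1` on `X_i × U`, the representation maps are strictly
monotonic in their third argument. -/
theorem stopped_additive_is_backward_separable
    {n m : ℕ} (T : ℕ) (hT : 1 ≤ T)
    (X : ℕ → Set (Fin n → ℝ)) (U : Set (Fin m → ℝ))
    (c : ℕ → (Fin n → ℝ) → (Fin m → ℝ) → ℝ) (cT : (Fin n → ℝ) → ℝ)
    (p : ℕ → (Fin n → ℝ) → (Fin m → ℝ) → ℝ) (pT : (Fin n → ℝ) → ℝ)
    (hp : ∀ t, t < T → ∀ a ∈ X t, ∀ b ∈ U, p t a b ∈ Set.Icc (0 : ℝ) 1)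
    (hpT : ∀ a ∈ X T, pT a ∈ Set.Icc (0 : ℝ) 1)
    (hlaw : ∀ (u : ℕ → Fin m → ℝ) (x : ℕ → Fin n → ℝ),
      (∀ t, t < T → u t ∈ U) → (∀ t, t ≤ T → x t ∈ X t) →
      (∑ t ∈ Finset.range T, p t (x t) (u t) *
          ∏ i ∈ Finset.range t, (1 - p i (x i) (u i))) +
        pT (x T) * ∏ i ∈ Finset.range T, (1 - p i (x i) (u i)) = 1)
    (J : (ℕ → Fin m → ℝ) → (ℕ → Fin n → ℝ) → ℝ)
    (hJ : ∀ u x, J u x =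
      (∑ t ∈ Finset.range T, (∑ s ∈ Finset.range (t + 1), c s (x s) (u s)) *
          (p t (x t) (u t) * ∏ i ∈ Finset.range t, (1 - p i (x i) (u i)))) +
        ((∑ t ∈ Finset.range T, c t (x t) (u t)) + cT (x T)) *
          (pT (x T) * ∏ i ∈ Finset.range T, (1 - p i (x i) (u i)))) :
    (IsRep T X U J (fun i a b z => c i a b + z * (1 - p i a b))
        (fun a => cT a * pT a) ∧
      MonoRep T X U (fun i a b z => c i a b + z * (1 - p i a b))
        (fun a => cT a * pT a)) ∧
    ((∀ t, t < T → ∃ R, ∀ a ∈ X t, ∀ b ∈ U, |c t a b| ≤ R) →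
      (∃ R, ∀ a ∈ X T, |cT a| ≤ R) →
        USCRep T X U (fun i a b z => c i a b + z * (1 - p i a b))
          (fun a => cT a * pT a) ∧
        BddRep T X U (fun i a b z => c i a b + z * (1 - p i a b))
          (fun a => cT a * pT a)) ∧
    ((∀ i, i < T → ∀ a ∈ X i, ∀ b ∈ U, p i a b ≠ 1) →
      StrictMonoRep T X U (fun i a b z => c i a b + z * (1 - p i a b))
        (fun a => cT a * pT a)) := by
  classical
  set φ : ℕ → (Fin n → ℝ) → (Fin m → ℝ) → ℝ → ℝ :=
    fun i a b z => c i a b + z * (1 - p i a b) with hφ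
  set φT : (Fin n → ℝ) → ℝ := fun a => cT a * pT a with hφT
  refine ⟨⟨?_, ?_⟩, ?_, ?_⟩
  · -- IsRep
    intro u x hu hx
    rw [hJ u x, nest_formula c cT p pT u x T 0]
    simp only [Nat.zero_add]
    set Q : ℕ → ℝ := fun t => p t (x t) (u t) *
      ∏ i ∈ Finset.range t, (1 - p i (x i) (u i)) with hQ
    have hlaw' := hlaw u x hu hx
    have htel := telescope (fun i => p i (x i) (u i))
    have htail : ∀ s, s ≤ T → ∑ t ∈ Finset.Ico s T, Q t
        = (∏ i ∈ Finset.range s, (1 - p i (x i) (u i)))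
          - pT (x T) * ∏ i ∈ Finset.range T, (1 - p i (x i) (u i)) := by
      intro s hs
      rw [Finset.sum_Ico_eq_sub _ hs]
      have h1 : ∑ t ∈ Finset.range T, Q t
          = 1 - pT (x T) * ∏ i ∈ Finset.range T, (1 - p i (x i) (u i)) := by
        linarith [hlaw']
      have h2 : ∑ t ∈ Finset.range s, Q t
          = 1 - ∏ i ∈ Finset.range s, (1 - p i (x i) (u i)) := htel s
      rw [h1, h2]; ring
    have hswap : ∑ t ∈ Finset.range T,
          (∑ s ∈ Finset.range (t + 1), c s (x s) (u s)) * Q t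
        = ∑ s ∈ Finset.range T, c s (x s) (u s) * ∑ t ∈ Finset.Ico s T, Q t := by
      have e1 : ∀ t ∈ Finset.range T,
          (∑ s ∈ Finset.range (t + 1), c s (x s) (u s)) * Q t
            = ∑ s ∈ Finset.range (t + 1), c s (x s) (u s) * Q t := fun t _ =>
        Finset.sum_mul ..
      rw [Finset.sum_congr rfl e1,
        sum_swap_tri (fun s t => c s (x s) (u s) * Q t) T]
      exact Finset.sum_congr rfl fun s _ => (Finset.mul_sum ..).symm
    have e2 : ∀ s ∈ Finset.range T, c s (x s) (u s) * ∑ t ∈ Finset.Ico s T, Q t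
        = c s (x s) (u s) * (∏ i ∈ Finset.range s, (1 - p i (x i) (u i)))
          - c s (x s) (u s) *
            (pT (x T) * ∏ i ∈ Finset.range T, (1 - p i (x i) (u i))) := by
      intro s hs
      rw [htail s (le_of_lt (Finset.mem_range.mp hs))]; ring
    rw [hswap, Finset.sum_congr rfl e2, Finset.sum_sub_distrib]
    rw [show (∑ t ∈ Finset.range T, c t (x t) (u t) + cT (x T)) *
        (pT (x T) * ∏ i ∈ Finset.range T, (1 - p i (x i) (u i)))
      = (∑ t ∈ Finset.range T, c t (x t) (u t) *
          (pT (x T) * ∏ i ∈ Finset.range T, (1 - p i (x i) (u i)))) +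
        cT (x T) * (pT (x T) * ∏ i ∈ Finset.range T, (1 - p i (x i) (u i)))
      from by rw [add_mul, Finset.sum_mul]]
    ring
  · -- MonoRep
    intro t ht a ha b hb z _ w _ hwz
    have hple := (hp t ht a ha b hb).2
    have : (0:ℝ) ≤ 1 - p t a b := by linarith
    simp only [hφ]
    nlinarith [mul_le_mul_of_nonneg_right hwz this]
  · -- USC and Bdd
    intro hc hcT
    constructor
    · intro t ht a ha b hb z _ _ L hL
      simp only [hφ]
      exact tendsto_const_nhds.add (hL.mul_const _)
    · -- BddRep
      have key : ∀ k t, t + k = T → ∃ R, 0 < R ∧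
          ∀ z ∈ imSet φ φT X U t k, |z| < R := by
        intro k
        induction k with
        | zero =>
            intro t htT
            simp only [Nat.add_zero] at htT
            subst htT
            obtain ⟨R, hR⟩ := hcT
            refine ⟨max R 0 + 1, by positivity, ?_⟩
            rintro z ⟨a, ha, rfl⟩
            have h1 := hR a ha
            have h2 := hpT a ha
            have hx : |φT a| ≤ R * 1 := by
              rw [hφT]
              calc |cT a * pT a| = |cT a| * |pT a| := abs_mul _ _
                _ ≤ R * 1 := by
                    apply mul_le_mul h1 _ (abs_nonneg _) (le_trans (abs_nonneg _) h1)
                    rw [abs_le]; constructor <;> linarith [h2.1, h2.2]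
            have := le_max_left R (0:ℝ)
            calc |φT a| ≤ R * 1 := hx
              _ < max R 0 + 1 := by linarith
        | succ k ih =>
            intro t htT
            have ht : t < T := by omega
            obtain ⟨R', hR'pos, hR'⟩ := ih (t + 1) (by omega)
            obtain ⟨Rc, hRc⟩ := hc t ht
            refine ⟨max Rc 0 + 1 + R', by positivity, ?_⟩
            rintro z ⟨a, ha, b, hb, w, hw, rfl⟩
            have hcb := hRc a ha b hb
            have hpm := hp t ht a ha b hb
            have hwb := hR' w hw
            have h1p : |1 - p t a b| ≤ 1 := by
              rw [abs_le]; constructor <;> [linarith [hpm.2]; linarith [hpm.1]]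
            calc |φ t a b w| = |c t a b + w * (1 - p t a b)| := rfl
              _ ≤ |c t a b| + |w * (1 - p t a b)| := abs_add_le _ _
              _ = |c t a b| + |w| * |1 - p t a b| := by rw [abs_mul]
              _ ≤ Rc + |w| * 1 :=
                  add_le_add hcb (mul_le_mul_of_nonneg_left h1p (abs_nonneg _))
              _ < max Rc 0 + 1 + R' := by
                  have := le_max_left Rc (0:ℝ)
                  linarith
      intro t htT
      exact key (T - t) t (by omega)
  · -- StrictMonoRep
    intro hne t ht a ha b hb z _ w _ hwz
    have hple := (hp t ht a ha b hb).2
    have hpne := hne t ht a ha b hb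
    have hpos : (0:ℝ) < 1 - p t a b := by
      rcases lt_or_eq_of_le hple with h | h
      · linarith
      · exact absurd h hpne
    simp only [hφ]
    nlinarith [mul_lt_mul_of_pos_right hwz hpos]
end

section
/- Fix h > 0 and T = 3, and consider n = m = 1, X_t = [0,h] for t = 0,…,3, U = {−h, 0, h}, f(x,u,t) = x + u, x_0 = 0, with c_0(u) = −u, c_1(u) = u, c_2(u) = −u/2 and d(x) = x. The MSOP initialized at (0,0) with cost J_0(u,x) = c_0(u(0)) + c_1(u(1)) + c_2(u(2)) + max_{0≤s≤3} x(s) has the unique solution u* = (h, −h, h) with trajectory x* = (0, h, 0, h); yet the truncated sequences v = (h), h-traj = (0, h) do NOT solve the MSOP initialized at (0,2) with cost J_2(u,x) = c_2(u(2)) + max_{2≤s≤3} x(s), whose unique optimal input is u(2) = 0 (cost 0 versus h/2). Hence this family of MSOP's does not satisfy the Principle of Optimality at x_0 = 0 even though the MSOP initialized at (0,0) has a unique solution. -/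
open Set Filter MeasureTheory

lemma step_mem_aux (h a u x1 : ℝ) (hh : 0 < h) (ha : a = 0 ∨ a = h)
    (hu : u = -h ∨ u = 0 ∨ u = h) (hx : x1 = a + u) (h0 : 0 ≤ x1) (h1 : x1 ≤ h) :
    x1 = 0 ∨ x1 = h := by
  rcases ha with rfl | rfl <;> rcases hu with rfl | rfl | rfl <;>
    first | (left; linarith) | (right; linarith)

/-- (Violation of the Principle of Optimality.) With `T = 3`,
`X_t = [0,h]`, `U = {-h,0,h}`, `f(x,u,t) = x + u`, `x_0 = 0`, cost
`J_0(u,x) = -u(0) + u(1) - u(2)/2 + max_{0≤s≤3} x(s)`, the MSOP initialized at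
`(0,0)` has the unique solution `u* = (h,-h,h)`, `x* = (0,h,0,h)`; yet the
truncation of `(u*,x*)` is feasible but not optimal for the MSOP at `(0,2)`
with cost `J_2(u,x) = -u(2)/2 + max_{2≤s≤3} x(s)`, whose unique optimal input
is `u(2) = 0` (cost `0` versus `h/2`). Hence the family of MSOP's does not
satisfy the Principle of Optimality at `x_0 = 0` even though the MSOP at
`(0,0)` has a unique solution. -/
theorem principle_of_optimality_counterexample
    (h : ℝ) (hh : 0 < h)
    (X : ℕ → Set ℝ) (hX : ∀ t, X t = Set.Icc 0 h)
    (U : Set ℝ) (hU : U = {-h, 0, h})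
    (f : ℝ → ℝ → ℕ → ℝ) (hf : ∀ x v t, f x v t = x + v)
    (J0 J2 : (ℕ → ℝ) → (ℕ → ℝ) → ℝ)
    (hJ0 : ∀ u x, J0 u x =
      (-(u 0) + u 1 + -(u 2) / 2) + max (max (max (x 0) (x 1)) (x 2)) (x 3))
    (hJ2 : ∀ u x, J2 u x = -(u 2) / 2 + max (x 2) (x 3))
    (ustar xstar : ℕ → ℝ)
    (hu0 : ustar 0 = h) (hu1 : ustar 1 = -h) (hu2 : ustar 2 = h)
    (hx0 : xstar 0 = 0) (hx1 : xstar 1 = h) (hx2 : xstar 2 = 0) (hx3 : xstar 3 = h) :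
    -- `(u*, x*)` is the unique solution of the MSOP initialized at `(0,0)`:
    (FeasFrom 3 f X U 0 0 ustar xstar ∧
      (∀ u x, FeasFrom 3 f X U 0 0 u x → J0 ustar xstar ≤ J0 u x) ∧
      ∀ u x, FeasFrom 3 f X U 0 0 u x →
        ((∀ t, t < 3 → u t = ustar t) ∧ ∀ t, t ≤ 3 → x t = xstar t) ∨
          J0 ustar xstar < J0 u x) ∧
    -- the truncation is feasible but does NOT solve the MSOP initialized at `(0,2)`:
    (FeasFrom 3 f X U (xstar 2) 2 ustar xstar ∧
      ¬ ∀ u x, FeasFrom 3 f X U (xstar 2) 2 u x → J2 ustar xstar ≤ J2 u x) ∧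
    -- at `(0,2)` the unique optimal input is `u(2) = 0`, with cost `0` versus `h/2`:
    ∀ u x, FeasFrom 3 f X U 0 2 u x →
      (u 2 = 0 → J2 u x = 0) ∧ (u 2 = h → J2 u x = h / 2) ∧
        (u 2 ≠ 0 → 0 < J2 u x) := by

  have hUm : ∀ v, v ∈ U → v = -h ∨ v = 0 ∨ v = h := by
    intro v hv; rw [hU] at hv; simpa using hv
  have hUmem : ∀ v : ℝ, (v = -h ∨ v = 0 ∨ v = h) → v ∈ U := by
    intro v hv; rw [hU]; simpa using hv
  have hXm : ∀ t (y : ℝ), y ∈ X t ↔ 0 ≤ y ∧ y ≤ h := by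
    intro t y; rw [hX t]; exact Set.mem_Icc
  have Jstar : J0 ustar xstar = -(3 * h) / 2 := by
    rw [hJ0, hu0, hu1, hu2, hx0, hx1, hx2, hx3,
      max_eq_right hh.le, max_eq_left hh.le, max_self]
    ring
  have key : ∀ u x, FeasFrom 3 f X U 0 0 u x →
      x 0 = 0 ∧ (x 1 = 0 ∨ x 1 = h) ∧ (x 2 = 0 ∨ x 2 = h) ∧ (x 3 = 0 ∨ x 3 = h) ∧
      x 1 = x 0 + u 0 ∧ x 2 = x 1 + u 1 ∧ x 3 = x 2 + u 2 := by
    intro u x hfe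
    obtain ⟨h0, hXt, hstep⟩ := hfe
    have d0 := hstep 0 (by norm_num) (by norm_num)
    have d1 := hstep 1 (by norm_num) (by norm_num)
    have d2 := hstep 2 (by norm_num) (by norm_num)
    rw [hf] at d0 d1 d2
    have m1 := (hXm 1 (x 1)).1 (hXt 1 (by norm_num) (by norm_num))
    have m2 := (hXm 2 (x 2)).1 (hXt 2 (by norm_num) (by norm_num))
    have m3 := (hXm 3 (x 3)).1 (hXt 3 (by norm_num) (by norm_num))
    have s1 : x 1 = 0 ∨ x 1 = h :=
      step_mem_aux h (x 0) (u 0) (x 1) hh (Or.inl h0) (hUm _ d0.1) d0.2 m1.1 m1.2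
    have s2 : x 2 = 0 ∨ x 2 = h :=
      step_mem_aux h (x 1) (u 1) (x 2) hh s1 (hUm _ d1.1) d1.2 m2.1 m2.2
    have s3 : x 3 = 0 ∨ x 3 = h :=
      step_mem_aux h (x 2) (u 2) (x 3) hh s2 (hUm _ d2.1) d2.2 m3.1 m3.2
    exact ⟨h0, s1, s2, s3, d0.2, d1.2, d2.2⟩
  refine ⟨⟨?_, ?_, ?_⟩, ⟨?_, ?_⟩, ?_⟩
  · -- feasibility of (ustar, xstar) at (0,0)
    refine ⟨hx0, ?_, ?_⟩
    · intro t _ ht; rw [hX t, Set.mem_Icc]; interval_cases t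
      · rw [hx0]; exact ⟨le_rfl, hh.le⟩
      · rw [hx1]; exact ⟨hh.le, le_rfl⟩
      · rw [hx2]; exact ⟨le_rfl, hh.le⟩
      · rw [hx3]; exact ⟨hh.le, le_rfl⟩
    · intro t _ ht; interval_cases t
      · exact ⟨hUmem _ (Or.inr (Or.inr hu0)), by rw [hf, hx1, hx0, hu0]; ring⟩
      · exact ⟨hUmem _ (Or.inl hu1), by rw [hf, hx2, hx1, hu1]; ring⟩
      · exact ⟨hUmem _ (Or.inr (Or.inr hu2)), by rw [hf, hx3, hx2, hu2]; ring⟩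
  · -- optimality
    intro u x hfe
    obtain ⟨h0, s1, s2, s3, d1, d2, d3⟩ := key u x hfe
    rw [Jstar, hJ0, h0]
    rcases s1 with e1 | e1 <;> rcases s2 with e2 | e2 <;> rcases s3 with e3 | e3 <;>
      rw [e1, e2, e3] <;> simp only [max_self, max_eq_right hh.le, max_eq_left hh.le] <;>
      linarith
  · -- uniqueness
    intro u x hfe
    obtain ⟨h0, s1, s2, s3, d1, d2, d3⟩ := key u x hfe
    have strict : ∀ (a b c : ℝ), x 1 = a → x 2 = b → x 3 = c →
        -(3*h)/2 < (-(u 0) + u 1 + -(u 2) / 2) + max (max (max (x 0) (x 1)) (x 2)) (x 3) →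
        J0 ustar xstar < J0 u x := by
      intro a b c _ _ _ hlt; rw [Jstar, hJ0]; exact hlt
    rcases s1 with e1 | e1 <;> rcases s2 with e2 | e2 <;> rcases s3 with e3 | e3
    · right; rw [Jstar, hJ0, h0, e1, e2, e3]
      simp only [max_self, max_eq_right hh.le, max_eq_left hh.le]; linarith
    · right; rw [Jstar, hJ0, h0, e1, e2, e3]
      simp only [max_self, max_eq_right hh.le, max_eq_left hh.le]; linarith
    · right; rw [Jstar, hJ0, h0, e1, e2, e3]
      simp only [max_self, max_eq_right hh.le, max_eq_left hh.le]; linarith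
    · right; rw [Jstar, hJ0, h0, e1, e2, e3]
      simp only [max_self, max_eq_right hh.le, max_eq_left hh.le]; linarith
    · right; rw [Jstar, hJ0, h0, e1, e2, e3]
      simp only [max_self, max_eq_right hh.le, max_eq_left hh.le]; linarith
    · -- (h, 0, h) : this is (ustar, xstar)
      left
      constructor
      · intro t ht; interval_cases t
        · rw [hu0]; linarith
        · rw [hu1]; linarith
        · rw [hu2]; linarith
      · intro t ht; interval_cases t
        · rw [h0, hx0]
        · rw [e1, hx1]
        · rw [e2, hx2]
        · rw [e3, hx3]
    · right; rw [Jstar, hJ0, h0, e1, e2, e3]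
      simp only [max_self, max_eq_right hh.le, max_eq_left hh.le]; linarith
    · right; rw [Jstar, hJ0, h0, e1, e2, e3]
      simp only [max_self, max_eq_right hh.le, max_eq_left hh.le]; linarith
  · -- truncation feasible at (xstar 2, 2)
    refine ⟨rfl, ?_, ?_⟩
    · intro t h2 h3; rw [hX t, Set.mem_Icc]; interval_cases t
      · rw [hx2]; exact ⟨le_rfl, hh.le⟩
      · rw [hx3]; exact ⟨hh.le, le_rfl⟩
    · intro t h2 h3; interval_cases t
      exact ⟨hUmem _ (Or.inr (Or.inr hu2)), by rw [hf, hx3, hx2, hu2]; ring⟩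
  · -- truncation not optimal
    intro hopt
    have hfeas : FeasFrom 3 f X U (xstar 2) 2 (fun _ => 0) (fun _ => 0) := by
      refine ⟨by rw [hx2], ?_, ?_⟩
      · intro t h2 h3; rw [hX t, Set.mem_Icc]; exact ⟨le_rfl, hh.le⟩
      · intro t h2 h3; interval_cases t
        exact ⟨hUmem _ (Or.inr (Or.inl rfl)), by rw [hf]; ring⟩
    have hle := hopt (fun _ => 0) (fun _ => 0) hfeas
    rw [hJ2, hJ2, hu2, hx2, hx3, max_eq_right hh.le] at hle
    simp only [max_self] at hle
    linarith
  · -- analysis at (0,2)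
    intro u x hfe
    obtain ⟨h2, hXt, hstep⟩ := hfe
    have d2 := hstep 2 le_rfl (by norm_num)
    rw [hf] at d2
    have m3 := (hXm 3 (x 3)).1 (hXt 3 (by norm_num) (by norm_num))
    have hu2c : u 2 = 0 ∨ u 2 = h := by
      rcases hUm _ d2.1 with e | e | e
      · exfalso; rw [d2.2, h2, e] at m3; linarith [m3.1]
      · exact Or.inl e
      · exact Or.inr e
    refine ⟨?_, ?_, ?_⟩
    · intro e
      have hx3' : x 3 = 0 := by rw [d2.2, h2, e]; ring
      rw [hJ2, e, h2, hx3', max_self]; ring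
    · intro e
      have hx3' : x 3 = h := by rw [d2.2, h2, e]; ring
      rw [hJ2, e, h2, hx3', max_eq_right hh.le]; ring
    · intro e
      rcases hu2c with e0 | eh
      · exact absurd e0 e
      · have hx3' : x 3 = h := by rw [d2.2, h2, eh]; ring
        rw [hJ2, eh, h2, hx3', max_eq_right hh.le]; linarith
end

section
/- Fix h > 0, T = 3, X_t = [0,h] ⊆ ℝ for t = 0,…,3, U = {−h, 0, h} ⊆ ℝ. Define, for t₀ ∈ {0,…,3}, J_{t₀}(u,x) = Σ_{s=t₀}^{2} c_s(u(s)) + max_{t₀≤s≤3} x(s) with c_0(u) = −u, c_1(u) = u, c_2(u) = −u/2. Then there do NOT exist representation maps φ_3 : X_3 → ℝ and φ_t : X_t × U × Image(φ_{t+1}) → ℝ (t = 0,1,2), each monotone in its third argument, such that for every t₀ ∈ {0,…,3} the tail cost satisfies J_{t₀}(u,x) = φ_{t₀}(x(t₀),u(t₀), φ_{t₀+1}(x(t₀+1),u(t₀+1), …, φ_3(x(3))…)); i.e. the function J of the form Σ_t c_t(u(t)) + max_t d(x(t)) is not (as a nested family) monotonically backward separable. -/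
open Set Filter MeasureTheory

/-- The family of tail costs
`J_{t₀}(u,x) = Σ_{s ∈ [t₀,3)} c_s(u s) + max_{t₀ ≤ s ≤ 3} x s`, with
`c_0(v) = -v`, `c_1(v) = v`, `c_2(v) = -v/2`, on `X_t = [0,h]`, `U = {-h,0,h}`,
is not (as a nested family) monotonically backward separable: there exist no
representation maps `φ_t`, monotone in their third argument, whose backward
compositions realize every tail cost `J_{t₀}`. -/
theorem sum_plus_max_not_backward_separable
    (h : ℝ) (hh : 0 < h)
    (X : ℕ → Set ℝ) (hX : ∀ t, X t = Set.Icc 0 h)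
    (U : Set ℝ) (hU : U = {-h, 0, h})
    (c : ℕ → ℝ → ℝ)
    (hc0 : ∀ v, c 0 v = -v) (hc1 : ∀ v, c 1 v = v) (hc2 : ∀ v, c 2 v = -v / 2)
    (J : ℕ → (ℕ → ℝ) → (ℕ → ℝ) → ℝ)
    (hJ : ∀ t0 (ht0 : t0 ≤ 3), ∀ (u : ℕ → ℝ) (x : ℕ → ℝ), J t0 u x =
      (∑ s ∈ Finset.Ico t0 3, c s (u s)) +
        (Finset.Icc t0 3).sup' (Finset.nonempty_Icc.mpr ht0) x) :
    ¬ ∃ (φ : ℕ → ℝ → ℝ → ℝ → ℝ) (φT : ℝ → ℝ),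
        MonoRep 3 X U φ φT ∧
        ∀ t0, t0 ≤ 3 → ∀ (u : ℕ → ℝ) (x : ℕ → ℝ),
          (∀ t, t0 ≤ t → t < 3 → u t ∈ U) →
          (∀ t, t0 ≤ t → t ≤ 3 → x t ∈ X t) →
          J t0 u x = nest φ φT u x t0 (3 - t0) := by
  rintro ⟨φ, φT, -, hrep⟩
  have hmem0 : (0:ℝ) ∈ Set.Icc (0:ℝ) h := ⟨le_rfl, hh.le⟩
  have hmemh : h ∈ Set.Icc (0:ℝ) h := ⟨hh.le, le_rfl⟩
  have hmemh2 : h/2 ∈ Set.Icc (0:ℝ) h := ⟨by linarith, by linarith⟩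
  have hU0 : (0:ℝ) ∈ U := by rw [hU]; right; left; rfl
  have hUh : h ∈ U := by rw [hU]; right; right; rfl
  -- φT on 0 and h/2
  have hT0 : φT 0 = 0 := by
    have := hrep 3 le_rfl (fun _ => 0) (fun _ => 0)
      (fun t ht ht' => by omega) (fun t ht ht' => by rw [hX]; exact hmem0)
    rw [hJ 3 le_rfl] at this
    simpa [nest, Finset.Icc_self] using this.symm
  have hTh2 : φT (h/2) = h/2 := by
    have := hrep 3 le_rfl (fun _ => 0) (fun _ => h/2)
      (fun t ht ht' => by omega) (fun t ht ht' => by rw [hX]; exact hmemh2)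
    rw [hJ 3 le_rfl] at this
    simpa [nest, Finset.Icc_self] using this.symm
  have hIco2 : Finset.Ico 2 3 = {2} := by decide
  have hIcc2 : Finset.Icc 2 3 = {2, 3} := by decide
  have hIco1 : Finset.Ico 1 3 = {1, 2} := by decide
  have hIcc1 : Finset.Icc 1 3 = {1, 2, 3} := by decide
  -- φ 2
  have h2A : φ 2 0 0 (φT 0) = 0 := by
    have := hrep 2 (by norm_num) (fun _ => 0) (fun _ => 0)
      (fun t ht ht' => hU0) (fun t ht ht' => by rw [hX]; exact hmem0)
    rw [hJ 2 (by norm_num)] at this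
    simp only [nest, hIco2, hIcc2, Finset.sum_singleton, hc2] at this
    rw [Finset.sup'_const] at this
    linarith [this]
  have h2B : φ 2 (h/2) h (φT (h/2)) = 0 := by
    have := hrep 2 (by norm_num) (fun t => if t = 2 then h else 0) (fun _ => h/2)
      (fun t ht ht' => by interval_cases t <;> simp [hU0, hUh])
      (fun t ht ht' => by rw [hX]; exact hmemh2)
    rw [hJ 2 (by norm_num)] at this
    simp only [nest, hIco2, hIcc2, Finset.sum_singleton, hc2] at this
    rw [Finset.sup'_const] at this
    norm_num at this
    linarith [this]
  rw [hT0] at h2A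
  rw [hTh2] at h2B
  -- φ 1
  set xA : ℕ → ℝ := fun t => if t = 1 then h else 0 with hxA
  set xB : ℕ → ℝ := fun t => if t = 1 then h else h/2 with hxB
  have h1A : φ 1 h 0 0 = h := by
    have := hrep 1 (by norm_num) (fun _ => 0) xA
      (fun t ht ht' => hU0)
      (fun t ht ht' => by rw [hX, hxA]; dsimp only; split <;> simp [hmem0, hmemh])
    rw [hJ 1 (by norm_num)] at this
    simp only [nest, hIco1, hIcc1, hxA] at this
    rw [Finset.sum_insert (by decide), Finset.sum_singleton] at this
    rw [Finset.sup'_insert, Finset.sup'_insert, Finset.sup'_singleton] at this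
    simp only [hc1, hc2] at this
    norm_num at this
    rw [hT0, h2A] at this
    rw [sup_eq_left.mpr hh.le] at this
    linarith [this]
    all_goals simp
  have h1B : φ 1 h 0 0 = h/2 := by
    have := hrep 1 (by norm_num) (fun t => if t = 2 then h else 0) xB
      (fun t ht ht' => by interval_cases t <;> simp [hU0, hUh])
      (fun t ht ht' => by rw [hX, hxB]; dsimp only; split <;> simp [hmemh2, hmemh])
    rw [hJ 1 (by norm_num)] at this
    simp only [nest, hIco1, hIcc1, hxB] at this
    rw [Finset.sum_insert (by decide), Finset.sum_singleton] at this
    rw [Finset.sup'_insert, Finset.sup'_insert, Finset.sup'_singleton] at this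
    simp only [hc1, hc2] at this
    norm_num at this
    rw [hTh2, h2B] at this
    rw [sup_eq_left.mpr (by linarith : h/2 ≤ h)] at this
    linarith [this]
    all_goals simp
  rw [h1A] at h1B
  linarith
end
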